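/- arXiv:2106.04881 — 4 statements merged into one kernel-verified Lean document; each statement's English description precedes it below -/
import Mathlib

section
/- Let μ be a Borel probability measure on ℝ^d such that the local dimension lim_{r→0} log μ(B(w,r))/log r exists for μ-almost every w ∈ ℝ^d. Then for every ε > 0 and every δ ∈ (0,1] there exists a bounded Borel set A ⊆ ℝ^d such that μ(A) ≥ 1 − δ and the upper Minkowski dimension of A satisfies dim̄_M A ≤ dim̄_H μ + ε. -/
open MeasureTheory Filter
open scoped ENNReal

/-- The upper Hausdorff dimension of a measure:
`dim̄_H μ := inf {dim_H A : A Borel, μ A = 1}`. -/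
noncomputable def upperHausdorffDim {X : Type*} [EMetricSpace X] [MeasurableSpace X]
    (μ : Measure X) : ℝ≥0∞ :=
  ⨅ (A : Set X) (_ : MeasurableSet A) (_ : μ A = 1), dimH A

/-- `coveringNumber δ F` is the smallest number of closed balls of diameter at
most `δ` (i.e. of radius `δ/2`) needed to cover `F`. -/
noncomputable def coveringNumber {X : Type*} [PseudoMetricSpace X] (δ : ℝ) (F : Set X) : ℕ :=
  sInf {k : ℕ | ∃ t : Finset X, t.card = k ∧ F ⊆ ⋃ x ∈ t, Metric.closedBall x (δ / 2)}

/-- The upper Minkowski (box-counting) dimension of a set: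
`dim̄_M F := limsup_{δ → 0⁺} log N_δ(F) / log (1/δ)`. -/
noncomputable def upperMinkowskiDim {X : Type*} [PseudoMetricSpace X] (F : Set X) : ℝ≥0∞ :=
  limsup (fun δ : ℝ => ENNReal.ofReal (Real.log (coveringNumber δ F) / Real.log (1 / δ)))
    (nhdsWithin 0 (Set.Ioi 0))


open Metric Set Topology

set_option linter.unusedSectionVars false

lemma measurable_measure_closedBall' {X : Type*} [MeasurableSpace X] [MetricSpace X]
    [OpensMeasurableSpace X] [SecondCountableTopology X] (μ : Measure X) [SFinite μ] (q : ℝ) :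
    Measurable fun w : X => μ (closedBall w q) := by
  have hs : MeasurableSet {p : X × X | dist p.2 p.1 ≤ q} :=
    (isClosed_le (by fun_prop) continuous_const).measurableSet
  have h := measurable_measure_prodMk_left (ν := μ) hs
  convert h using 2 with w
  rfl

lemma tiny_zero {x : ℝ≥0∞} {c τ : ℝ} (hc : 0 < c) (hτ : 0 < τ)
    (h : ∀ q : ℚ, 0 < (q : ℝ) → (q : ℝ) ≤ c → x ≤ ENNReal.ofReal ((q : ℝ) ^ τ)) : x = 0 := by
  refine le_antisymm ?_ zero_le
  have key : ∀ m : ℕ, x ≤ ENNReal.ofReal ((1 / (m + 1) : ℝ) ^ τ) := by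
    intro m
    obtain ⟨q, hq0, hq1⟩ := exists_rat_btwn (show (0 : ℝ) < min c (1 / (m + 1)) by positivity)
    calc x ≤ ENNReal.ofReal ((q : ℝ) ^ τ) :=
          h q hq0 (le_of_lt (lt_of_lt_of_le hq1 (min_le_left _ _)))
      _ ≤ _ := ENNReal.ofReal_le_ofReal
          (Real.rpow_le_rpow hq0.le (le_of_lt (lt_of_lt_of_le hq1 (min_le_right _ _))) hτ.le)
  have ht : Tendsto (fun m : ℕ => ENNReal.ofReal ((1 / (m + 1) : ℝ) ^ τ)) atTop (𝓝 0) := by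
    have h1 : Tendsto (fun m : ℕ => (1 / (m + 1) : ℝ)) atTop (𝓝 0) :=
      tendsto_one_div_add_atTop_nhds_zero_nat
    have h2 : Tendsto (fun y : ℝ => y ^ τ) (𝓝 0) (𝓝 0) := by
      have := (Real.continuousAt_rpow_const 0 τ (Or.inr hτ.le)).tendsto
      simpa [Real.zero_rpow hτ.ne'] using this
    have := (ENNReal.continuous_ofReal.tendsto 0).comp (h2.comp h1)
    simpa [Function.comp_def] using this
  simpa using ge_of_tendsto' ht key

lemma frostman_step {X : Type*} [MeasurableSpace X] [MetricSpace X] [BorelSpace X]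
    (μ : Measure X) [IsProbabilityMeasure μ] {τ₁ τ₂ c : ℝ} (h2 : 0 < τ₂) (h12 : τ₂ < τ₁)
    (hc : 0 < c) {F : Set X} (hFm : MeasurableSet F)
    (hF : ∀ w ∈ F, ∀ q : ℚ, 0 < (q : ℝ) → (q : ℝ) ≤ c →
      μ (closedBall w (q : ℝ)) ≤ ENNReal.ofReal ((q : ℝ) ^ τ₁))
    (hμF : μ F ≠ 0) : ENNReal.ofReal τ₂ ≤ upperHausdorffDim μ := by
  set ν : Measure X := μ.restrict F with hν
  set r₀ : ℝ := min (c / 2) ((1 / 2 : ℝ) ^ (τ₁ / (τ₁ - τ₂))) with hr₀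
  have hr₀pos : 0 < r₀ := lt_min (by linarith) (Real.rpow_pos_of_pos one_half_pos _)
  have hkey : ∀ ρr : ℝ, 0 < ρr → ρr ≤ r₀ → (2 * ρr) ^ τ₁ ≤ ρr ^ τ₂ := by
    intro ρr hρ hρr
    have hsubpos : (0:ℝ) < τ₁ - τ₂ := by linarith
    have h1 : (2 * ρr) ^ τ₁ = 2 ^ τ₁ * (ρr ^ (τ₁ - τ₂) * ρr ^ τ₂) := by
      rw [Real.mul_rpow (by norm_num) hρ.le, ← Real.rpow_add hρ]; ring_nf
    have h3 : ρr ^ (τ₁ - τ₂) ≤ (1 / 2 : ℝ) ^ τ₁ := by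
      have h := Real.rpow_le_rpow hρ.le (hρr.trans (min_le_right _ _)) hsubpos.le
      rwa [← Real.rpow_mul (by norm_num : (0:ℝ) ≤ 1/2), div_mul_cancel₀ _ hsubpos.ne'] at h
    calc (2 * ρr) ^ τ₁ = 2 ^ τ₁ * (ρr ^ (τ₁ - τ₂) * ρr ^ τ₂) := h1
      _ ≤ 2 ^ τ₁ * ((1/2 : ℝ) ^ τ₁ * ρr ^ τ₂) := by
          have hρτ : (0:ℝ) ≤ ρr ^ τ₂ := (Real.rpow_pos_of_pos hρ _).le
          have h2τ : (0:ℝ) ≤ (2:ℝ) ^ τ₁ := (Real.rpow_pos_of_pos two_pos _).le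
          nlinarith [Real.rpow_pos_of_pos hρ τ₂, mul_le_mul_of_nonneg_right h3 hρτ]
      _ = (2 * (1/2) : ℝ) ^ τ₁ * ρr ^ τ₂ := by
          rw [Real.mul_rpow (by norm_num) (by norm_num)]; ring
      _ = ρr ^ τ₂ := by norm_num
  have hmain : ∀ S : Set X, EMetric.diam S ≤ ENNReal.ofReal r₀ → ν S ≤ EMetric.diam S ^ τ₂ := by
    intro S hS
    rcases (S ∩ F).eq_empty_or_nonempty with hSF | ⟨w, hwS, hwF⟩
    · have hz : ν S = 0 := by
        have := measure_mono (μ := μ) (inter_subset_inter_left F (subset_rfl : S ⊆ S))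
        rw [Measure.restrict_apply' hFm, hSF]; simp
      simp [hz]
    · have hρtop : EMetric.diam S ≠ ⊤ := (hS.trans_lt ENNReal.ofReal_lt_top).ne
      have hνle : ∀ q : ℚ, 0 < (q:ℝ) → (q:ℝ) ≤ c → S ⊆ closedBall w (q:ℝ) →
          ν S ≤ ENNReal.ofReal ((q:ℝ) ^ τ₁) := by
        intro q hq0 hqc hsub
        calc ν S ≤ μ (S ∩ F) := le_of_eq (Measure.restrict_apply' hFm)
          _ ≤ μ (closedBall w (q:ℝ)) := measure_mono (inter_subset_left.trans hsub)
          _ ≤ _ := hF w hwF q hq0 hqc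
      rcases eq_or_ne (EMetric.diam S) 0 with hρ0 | hρ0
      · have hsub : ∀ q : ℚ, 0 < (q:ℝ) → S ⊆ closedBall w (q:ℝ) := by
          intro q hq0 y hy
          have he : edist y w = 0 :=
            le_antisymm (hρ0 ▸ EMetric.edist_le_diam_of_mem hy hwS) zero_le
          have hyw : y = w := by simpa [edist_eq_zero] using he
          simp [hyw, Metric.mem_closedBall, hq0.le]
        have hz : ν S = 0 :=
          tiny_zero hc (h2.trans h12) (fun q hq0 hqc => hνle q hq0 hqc (hsub q hq0))
        simp [hz]
      · have hρpos : 0 < (EMetric.diam S).toReal := ENNReal.toReal_pos hρ0 hρtop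
        set ρr := (EMetric.diam S).toReal with hρrdef
        have hρrr₀ : ρr ≤ r₀ := ENNReal.toReal_le_of_le_ofReal hr₀pos.le hS
        obtain ⟨q, hq1, hq2⟩ := exists_rat_btwn (show ρr < 2 * ρr by linarith)
        have hq0 : 0 < (q:ℝ) := hρpos.trans hq1
        have hqc : (q:ℝ) ≤ c := by
          have hm : r₀ ≤ c / 2 := min_le_left _ _
          nlinarith
        have hsub : S ⊆ closedBall w (q:ℝ) := by
          intro y hy
          have h1 : edist y w ≤ EMetric.diam S := EMetric.edist_le_diam_of_mem hy hwS
          have hd : dist y w ≤ ρr := by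
            rw [dist_edist]
            exact ENNReal.toReal_mono hρtop h1
          exact Metric.mem_closedBall.2 (hd.trans hq1.le)
        calc ν S ≤ ENNReal.ofReal ((q:ℝ) ^ τ₁) := hνle q hq0 hqc hsub
          _ ≤ ENNReal.ofReal ((2 * ρr) ^ τ₁) :=
              ENNReal.ofReal_le_ofReal (Real.rpow_le_rpow hq0.le hq2.le (by linarith))
          _ ≤ ENNReal.ofReal (ρr ^ τ₂) := ENNReal.ofReal_le_ofReal (hkey ρr hρpos hρrr₀)
          _ = EMetric.diam S ^ τ₂ := by
              rw [← ENNReal.ofReal_rpow_of_pos hρpos, ENNReal.ofReal_toReal hρtop]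
  have hν2 : ν ≤ μH[τ₂] :=
    Measure.le_hausdorffMeasure τ₂ ν (ENNReal.ofReal r₀) (ENNReal.ofReal_pos.2 hr₀pos) hmain
  refine le_iInf fun B => le_iInf fun hB => le_iInf fun hμB => ?_
  have hBc : μ Bᶜ = 0 := by
    rw [measure_compl hB (measure_ne_top μ B), hμB, measure_univ, tsub_self]
  have hμBF : μ F ≤ μH[τ₂] B := by
    calc μ F ≤ μ ((B ∩ F) ∪ Bᶜ) := measure_mono (fun x hx => by
          by_cases hxB : x ∈ B
          · exact Or.inl ⟨hxB, hx⟩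
          · exact Or.inr hxB)
      _ ≤ μ (B ∩ F) + μ Bᶜ := measure_union_le _ _
      _ = ν B := by rw [hBc, add_zero, Measure.restrict_apply' hFm]
      _ ≤ μH[τ₂] B := Measure.le_iff'.1 hν2 B
  have hne : μH[(τ₂.toNNReal : ℝ)] B ≠ 0 := by
    rw [Real.coe_toNNReal _ h2.le]
    exact fun h => hμF (le_zero_iff.1 (h ▸ hμBF))
  have hdim := le_dimH_of_hausdorffMeasure_ne_zero hne
  simpa [ENNReal.ofReal] using hdim

section Main

variable {X : Type*} [MeasurableSpace X] [MetricSpace X] [BorelSpace X]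
  [SecondCountableTopology X]

/-- almost every point has positive measure on all its closed balls of rational radius -/
lemma ae_ball_pos (μ : Measure X) [IsProbabilityMeasure μ] :
    ∀ᵐ w ∂μ, ∀ q : ℚ, 0 < (q : ℝ) → μ (closedBall w (q : ℝ)) ≠ 0 := by
  obtain ⟨D, hDc, hDd⟩ := TopologicalSpace.exists_countable_dense X
  have hV : ∀ q : ℚ, μ {w | 0 < (q : ℝ) ∧ μ (closedBall w (q : ℝ)) = 0} = 0 := by
    intro q
    by_cases hq : 0 < (q : ℝ)
    · set T := {x ∈ D | μ (closedBall x ((q : ℝ) / 2)) = 0} with hT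
      have hTc : T.Countable := hDc.mono (sep_subset _ _)
      have hsub : {w | 0 < (q : ℝ) ∧ μ (closedBall w (q : ℝ)) = 0} ⊆
          ⋃ x ∈ T, closedBall x ((q : ℝ) / 2) := by
        rintro w ⟨-, hw0⟩
        obtain ⟨x, hxball, hxD⟩ := Metric.dense_iff.1 hDd w ((q : ℝ) / 2) (by linarith)
        have hdist : dist x w < (q : ℝ) / 2 := Metric.mem_ball.1 hxball
        have hsub2 : closedBall x ((q : ℝ) / 2) ⊆ closedBall w (q : ℝ) :=
          closedBall_subset_closedBall' (by linarith)
        have hx0 : μ (closedBall x ((q : ℝ) / 2)) = 0 :=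
          le_antisymm (hw0 ▸ measure_mono hsub2) zero_le
        exact mem_biUnion ⟨hxD, hx0⟩ (Metric.mem_closedBall.2 (by rw [dist_comm]; linarith))
      refine measure_mono_null hsub ?_
      rw [measure_biUnion_null_iff hTc]
      exact fun x hx => hx.2
    · exact measure_mono_null (fun w hw => (hq hw.1).elim) measure_empty
  have hZ : μ (⋃ q : ℚ, {w | 0 < (q : ℝ) ∧ μ (closedBall w (q : ℝ)) = 0}) = 0 :=
    measure_iUnion_null hV
  rw [← compl_compl (⋃ q : ℚ, _)] at hZ
  filter_upwards [measure_eq_zero_iff_ae_notMem.1 (measure_iUnion_null hV)] with w hw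
  intro q hq hμ0
  exact hw (mem_iUnion.2 ⟨q, hq, hμ0⟩)


lemma covering_bound (μ : Measure X) [IsProbabilityMeasure μ] {τ c : ℝ} (hτ : 0 < τ)
    {A : Set X}
    (hA : ∀ x ∈ A, ∀ q : ℚ, 0 < (q : ℝ) → (q : ℝ) ≤ c →
      ENNReal.ofReal ((q : ℝ) ^ τ) ≤ μ (closedBall x (q : ℝ)))
    {δ' : ℝ} (hδ'0 : 0 < δ') (hδ'c : δ' < c) :
    (coveringNumber δ' A : ℝ) ≤ (δ' / 10) ^ (-τ) := by
  classical
  have hb0 : (0:ℝ) < (δ' / 10) ^ τ := Real.rpow_pos_of_pos (by linarith) _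
  -- cardinality bound for separated subsets of A
  have hsep : ∀ t : Finset X, ↑t ⊆ A → (∀ x ∈ t, ∀ y ∈ t, x ≠ y → δ' / 2 < dist x y) →
      (t.card : ℝ) ≤ (δ' / 10) ^ (-τ) := by
    intro t htA htsep
    have hdisj : (t : Set X).PairwiseDisjoint fun x => closedBall x (δ' / 5) := by
      intro x hx y hy hxy
      exact closedBall_disjoint_closedBall (by have := htsep x hx y hy hxy; linarith)
    have hsum : ∑ x ∈ t, μ (closedBall x (δ' / 5)) ≤ 1 := by
      rw [← measure_biUnion_finset hdisj (fun x _ => measurableSet_closedBall)]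
      exact (measure_mono (Set.subset_univ _)).trans measure_univ.le
    have hlow : ∀ x ∈ t, ENNReal.ofReal ((δ' / 10) ^ τ) ≤ μ (closedBall x (δ' / 5)) := by
      intro x hx
      obtain ⟨q, hq1, hq2⟩ := exists_rat_btwn (show δ' / 10 < δ' / 5 by linarith)
      have hq0 : 0 < (q : ℝ) := by linarith
      calc ENNReal.ofReal ((δ' / 10) ^ τ) ≤ ENNReal.ofReal ((q : ℝ) ^ τ) :=
            ENNReal.ofReal_le_ofReal (Real.rpow_le_rpow (by linarith) hq1.le hτ.le)
        _ ≤ μ (closedBall x (q : ℝ)) := hA x (htA hx) q hq0 (by linarith)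
        _ ≤ μ (closedBall x (δ' / 5)) := measure_mono (closedBall_subset_closedBall hq2.le)
    have hcard : (t.card : ℝ≥0∞) * ENNReal.ofReal ((δ' / 10) ^ τ) ≤ 1 := by
      calc (t.card : ℝ≥0∞) * ENNReal.ofReal ((δ' / 10) ^ τ)
          = t.card • ENNReal.ofReal ((δ' / 10) ^ τ) := by rw [nsmul_eq_mul]
        _ ≤ ∑ x ∈ t, μ (closedBall x (δ' / 5)) := Finset.card_nsmul_le_sum t _ _ hlow
        _ ≤ 1 := hsum
    have hreal : (t.card : ℝ) * (δ' / 10) ^ τ ≤ 1 := by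
      rw [← ENNReal.ofReal_natCast, ← ENNReal.ofReal_mul (by positivity)] at hcard
      exact_mod_cast ENNReal.ofReal_le_one.1 hcard
    rw [Real.rpow_neg (by linarith), ← one_div]
    rw [le_div_iff₀ hb0]
    exact hreal
  -- a maximal separated set gives a covering
  set S := {k : ℕ | ∃ t : Finset X, ↑t ⊆ A ∧
      (∀ x ∈ t, ∀ y ∈ t, x ≠ y → δ' / 2 < dist x y) ∧ t.card = k} with hS
  have h0S : 0 ∈ S := ⟨∅, by simp, by simp, by simp⟩
  have hSbdd : ∀ k ∈ S, k ≤ ⌊(δ' / 10) ^ (-τ)⌋₊ := by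
    rintro k ⟨t, htA, htsep, rfl⟩
    exact Nat.le_floor (hsep t htA htsep)
  have hSmem : sSup S ∈ S := Nat.sSup_mem ⟨0, h0S⟩ ⟨⌊(δ' / 10) ^ (-τ)⌋₊, hSbdd⟩
  obtain ⟨t₀, ht₀A, ht₀sep, ht₀card⟩ := hSmem
  have hcover : A ⊆ ⋃ x ∈ t₀, closedBall x (δ' / 2) := by
    intro a ha
    by_contra hnot
    have hfar : ∀ x ∈ t₀, δ' / 2 < dist a x := by
      intro x hx
      by_contra hle
      exact hnot (mem_biUnion hx (Metric.mem_closedBall.2 (le_of_not_gt hle)))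
    have hat₀ : a ∉ t₀ := fun h => by
      have := hfar a h; simp at this; linarith
    have hmem : t₀.card + 1 ∈ S := by
      refine ⟨insert a t₀, ?_, ?_, by rw [Finset.card_insert_of_notMem hat₀]⟩
      · intro x hx
        rcases Finset.mem_coe.1 hx |> Finset.mem_insert.1 with rfl | hxt
        · exact ha
        · exact ht₀A hxt
      · intro x hx y hy hxy
        rcases Finset.mem_insert.1 hx with rfl | hxt <;> rcases Finset.mem_insert.1 hy with rfl | hyt
        · exact absurd rfl hxy
        · exact hfar y hyt
        · rw [dist_comm]; exact hfar x hxt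
        · exact ht₀sep x hxt y hyt hxy
    have := le_csSup ⟨⌊(δ' / 10) ^ (-τ)⌋₊, fun k hk => Nat.cast_le.2 (hSbdd k hk)⟩ hmem
    rw [ht₀card] at this
    omega
  have hcov : coveringNumber δ' A ≤ t₀.card :=
    Nat.sInf_le ⟨t₀, rfl, hcover⟩
  calc (coveringNumber δ' A : ℝ) ≤ (t₀.card : ℝ) := Nat.cast_le.2 hcov
    _ ≤ _ := hsep t₀ ht₀A ht₀sep

lemma minkowski_bound (μ : Measure X) [IsProbabilityMeasure μ] {τ c ε : ℝ} (hτ : 0 < τ)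
    (hc0 : 0 < c) (hc1 : c ≤ 1) (hε : 0 < ε) {A : Set X}
    (hA : ∀ x ∈ A, ∀ q : ℚ, 0 < (q : ℝ) → (q : ℝ) ≤ c →
      ENNReal.ofReal ((q : ℝ) ^ τ) ≤ μ (closedBall x (q : ℝ))) :
    upperMinkowskiDim A ≤ ENNReal.ofReal (τ + ε) := by
  have hlog10 : (0:ℝ) < Real.log 10 := Real.log_pos (by norm_num)
  set K := τ * Real.log 10 / ε with hK
  have hKpos : 0 < K := by positivity
  set r₅ := min c (Real.exp (-K)) with hr₅
  have hr₅pos : 0 < r₅ := lt_min hc0 (Real.exp_pos _)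
  have hev : ∀ᶠ δ' in nhdsWithin (0:ℝ) (Set.Ioi 0),
      ENNReal.ofReal (Real.log (coveringNumber δ' A) / Real.log (1 / δ')) ≤
        ENNReal.ofReal (τ + ε) := by
    filter_upwards [Ioo_mem_nhdsGT_of_mem (Set.left_mem_Ico.2 hr₅pos)] with δ' hδ'
    obtain ⟨h0, h5⟩ := hδ'
    have hδc : δ' < c := h5.trans_le (min_le_left _ _)
    have hδ1 : δ' < 1 := lt_of_lt_of_le hδc hc1
    have hL : 0 < Real.log (1 / δ') := Real.log_pos (one_lt_one_div h0 hδ1)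
    have hlogδ : Real.log δ' < -K := by
      have h := Real.log_lt_log h0 (h5.trans_le (min_le_right _ _))
      rwa [Real.log_exp] at h
    have hLK : K < Real.log (1 / δ') := by
      rw [one_div, Real.log_inv]; linarith
    have hcov := covering_bound μ hτ hA h0 hδc
    have hlogN : Real.log (coveringNumber δ' A) ≤ τ * (Real.log 10 + Real.log (1 / δ')) := by
      have hrhs : (0:ℝ) ≤ τ * (Real.log 10 + Real.log (1 / δ')) := by positivity
      rcases Nat.eq_zero_or_pos (coveringNumber δ' A) with h | h
      · simpa [h] using hrhs
      · have hpos : (0:ℝ) < (coveringNumber δ' A : ℝ) := by exact_mod_cast h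
        have h1 : Real.log (coveringNumber δ' A) ≤ Real.log ((δ' / 10) ^ (-τ)) :=
          Real.log_le_log hpos hcov
        rw [Real.log_rpow (by linarith : (0:ℝ) < δ' / 10),
          Real.log_div (ne_of_gt h0) (by norm_num)] at h1
        have hinv : Real.log (1/δ') = - Real.log δ' := by rw [one_div, Real.log_inv]
        nlinarith [h1]
    have hratio : Real.log (coveringNumber δ' A) / Real.log (1 / δ') ≤ τ + ε := by
      rw [div_le_iff₀ hL]
      have h2 : τ * Real.log 10 ≤ ε * Real.log (1 / δ') := by
        have he : τ * Real.log 10 = ε * K := by rw [hK]; field_simp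
        nlinarith
      calc Real.log (coveringNumber δ' A) ≤ τ * (Real.log 10 + Real.log (1 / δ')) := hlogN
        _ = τ * Real.log 10 + τ * Real.log (1/δ') := by ring
        _ ≤ ε * Real.log (1/δ') + τ * Real.log (1/δ') := by linarith
        _ = (τ + ε) * Real.log (1/δ') := by ring
    exact ENNReal.ofReal_le_ofReal hratio
  exact limsup_le_of_le (by isBoundedDefault) hev

lemma measSet_le (μ : Measure X) [SFinite μ] (τ' c : ℝ) :
    MeasurableSet {w : X | ∀ q : ℚ, 0 < (q : ℝ) → (q : ℝ) ≤ c →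
      μ (closedBall w (q : ℝ)) ≤ ENNReal.ofReal ((q : ℝ) ^ τ')} := by
  rw [Set.setOf_forall]
  refine MeasurableSet.iInter fun q => ?_
  by_cases h1 : 0 < (q : ℝ)
  · by_cases h2 : (q : ℝ) ≤ c
    · simp only [h1, h2, forall_true_left]
      exact measurableSet_le (measurable_measure_closedBall' μ _) measurable_const
    · simp [h1, h2]
  · simp [h1]

lemma measSet_ge (μ : Measure X) [SFinite μ] (τ' c : ℝ) :
    MeasurableSet {w : X | ∀ q : ℚ, 0 < (q : ℝ) → (q : ℝ) ≤ c →
      ENNReal.ofReal ((q : ℝ) ^ τ') ≤ μ (closedBall w (q : ℝ))} := by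
  rw [Set.setOf_forall]
  refine MeasurableSet.iInter fun q => ?_
  by_cases h1 : 0 < (q : ℝ)
  · by_cases h2 : (q : ℝ) ≤ c
    · simp only [h1, h2, forall_true_left]
      exact measurableSet_le measurable_const (measurable_measure_closedBall' μ _)
    · simp [h1, h2]
  · simp [h1]

end Main

/-- Proposition 1: if the local dimension
`lim_{r→0} log μ(B(w,r))/log r` exists for `μ`-almost every `w`, then for every
`ε > 0` and every `δ ∈ (0,1]` there is a bounded Borel set `A` with
`μ(A) ≥ 1 − δ` and `dim̄_M A ≤ dim̄_H μ + ε`. -/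
theorem exists_almost_full_measure_set_of_small_minkowski_dim
    (d : ℕ) (μ : Measure (EuclideanSpace ℝ (Fin d))) [IsProbabilityMeasure μ]
    (hloc : ∀ᵐ w ∂μ, ∃ c : ℝ, Tendsto
      (fun r : ℝ => Real.log (μ (Metric.closedBall w r)).toReal / Real.log r)
      (nhdsWithin 0 (Set.Ioi 0)) (nhds c))
    (ε : ℝ) (hε : 0 < ε) (δ : ℝ) (hδ : δ ∈ Set.Ioc (0 : ℝ) 1) :
    ∃ A : Set (EuclideanSpace ℝ (Fin d)), MeasurableSet A ∧ Bornology.IsBounded A ∧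
      ENNReal.ofReal (1 - δ) ≤ μ A ∧
      upperMinkowskiDim A ≤ upperHausdorffDim μ + ENNReal.ofReal ε := by
  classical
  have hsle : upperHausdorffDim μ ≤ dimH (Set.univ : Set (EuclideanSpace ℝ (Fin d))) := by
    refine iInf_le_of_le Set.univ ?_
    refine iInf_le_of_le MeasurableSet.univ ?_
    exact iInf_le _ measure_univ
  have hsfin : upperHausdorffDim μ ≠ ⊤ := by
    refine ne_top_of_le_ne_top ?_ hsle
    rw [Real.dimH_univ_eq_finrank]
    exact ENNReal.natCast_ne_top _
  set α := (upperHausdorffDim μ).toReal with hα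
  have hα0 : 0 ≤ α := ENNReal.toReal_nonneg
  -- the exceptional Frostman sets are null
  have hFnull : ∀ n : ℕ, μ {w | ∀ q : ℚ, 0 < (q : ℝ) → (q : ℝ) ≤ 1/(n+1) →
      μ (closedBall w (q : ℝ)) ≤ ENNReal.ofReal ((q : ℝ) ^ (α + ε/4))} = 0 := by
    intro n
    by_contra hne
    have hfr := frostman_step μ (show 0 < α + ε/8 by linarith)
      (show α + ε/8 < α + ε/4 by linarith)
      (show (0:ℝ) < 1/(n+1) by positivity) (measSet_le μ (α + ε/4) (1/(n+1)))
      (fun w hw => hw) hne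
    have h2 := ENNReal.toReal_mono hsfin hfr
    rw [ENNReal.toReal_ofReal (by linarith)] at h2
    rw [← hα] at h2
    linarith
  -- the good sets
  set Aset : ℕ → Set (EuclideanSpace ℝ (Fin d)) := fun N =>
    closedBall 0 (N+1) ∩ {w | ∀ q : ℚ, 0 < (q : ℝ) → (q : ℝ) ≤ 1/(N+1) →
      ENNReal.ofReal ((q : ℝ) ^ (α + ε/2)) ≤ μ (closedBall w (q : ℝ))} with hAsetdef
  have hAmeas : ∀ N, MeasurableSet (Aset N) := fun N =>
    measurableSet_closedBall.inter (measSet_ge μ (α + ε/2) (1/(N+1)))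
  have hAmono : Monotone Aset := by
    intro N M hNM w hw
    refine ⟨closedBall_subset_closedBall (by exact_mod_cast Nat.succ_le_succ hNM) hw.1, ?_⟩
    intro q hq0 hqle
    refine hw.2 q hq0 (hqle.trans ?_)
    exact one_div_le_one_div_of_le (by positivity) (by exact_mod_cast Nat.succ_le_succ hNM)
  -- a.e. membership in the union
  have hF' : ∀ᵐ w ∂μ, ∀ n : ℕ, ¬ (∀ q : ℚ, 0 < (q : ℝ) → (q : ℝ) ≤ 1/(n+1) →
      μ (closedBall w (q : ℝ)) ≤ ENNReal.ofReal ((q : ℝ) ^ (α + ε/4))) := by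
    rw [ae_all_iff]
    intro n
    exact measure_eq_zero_iff_ae_notMem.1 (hFnull n)
  have hae : ∀ᵐ w ∂μ, w ∈ ⋃ N, Aset N := by
    filter_upwards [hloc, ae_ball_pos μ, hF'] with w hw1 hw2 hw3
    obtain ⟨cw, hcw⟩ := hw1
    have hpos : ∀ q : ℚ, 0 < (q : ℝ) → 0 < (μ (closedBall w (q : ℝ))).toReal := fun q hq =>
      ENNReal.toReal_pos (hw2 q hq) (measure_ne_top μ _)
    -- step 1: cw is at most α + ε/4
    have hcwle : cw ≤ α + ε/4 := by
      by_contra hgt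
      push_neg at hgt
      have hev : ∀ᶠ r in nhdsWithin (0:ℝ) (Set.Ioi 0),
          α + ε/4 < Real.log (μ (closedBall w r)).toReal / Real.log r :=
        hcw.eventually (eventually_gt_nhds hgt)
      obtain ⟨u, hu, huP⟩ := mem_nhdsGT_iff_exists_Ioo_subset.1 hev
      obtain ⟨n, hn⟩ := exists_nat_one_div_lt (lt_min (Set.mem_Ioi.1 hu) one_pos)
      refine hw3 n ?_
      intro q hq0 hqle
      have hq1 : (q : ℝ) < 1 := lt_of_le_of_lt hqle (lt_of_lt_of_le hn (min_le_right _ _))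
      have hqu : (q : ℝ) < u := lt_of_le_of_lt hqle (lt_of_lt_of_le hn (min_le_left _ _))
      have hfq := huP ⟨hq0, hqu⟩
      rw [Set.mem_setOf_eq, lt_div_iff_of_neg (Real.log_neg hq0 hq1)] at hfq
      have hlt : (μ (closedBall w (q : ℝ))).toReal < (q : ℝ) ^ (α + ε/4) := by
        rw [← Real.exp_log (hpos q hq0), Real.rpow_def_of_pos hq0]
        exact Real.exp_lt_exp.2 (by rw [mul_comm] at hfq; exact hfq)
      calc μ (closedBall w (q : ℝ))
          = ENNReal.ofReal (μ (closedBall w (q : ℝ))).toReal :=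
            (ENNReal.ofReal_toReal (measure_ne_top μ _)).symm
        _ ≤ ENNReal.ofReal ((q : ℝ) ^ (α + ε/4)) := ENNReal.ofReal_le_ofReal hlt.le
    -- step 2: membership in some Aset N
    have hev2 : ∀ᶠ r in nhdsWithin (0:ℝ) (Set.Ioi 0),
        Real.log (μ (closedBall w r)).toReal / Real.log r < α + ε/2 :=
      hcw.eventually (eventually_lt_nhds (by linarith))
    obtain ⟨u, hu, huP⟩ := mem_nhdsGT_iff_exists_Ioo_subset.1 hev2
    obtain ⟨n, hn⟩ := exists_nat_one_div_lt (lt_min (Set.mem_Ioi.1 hu) one_pos)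
    set N := max n ⌈‖w‖⌉₊ with hNdef
    refine Set.mem_iUnion.2 ⟨N, ?_, ?_⟩
    · rw [mem_closedBall_zero_iff]
      calc ‖w‖ ≤ (⌈‖w‖⌉₊ : ℝ) := Nat.le_ceil _
        _ ≤ (N : ℝ) := by exact_mod_cast le_max_right _ _
        _ ≤ (N : ℝ) + 1 := by linarith
    · intro q hq0 hqle
      have h1N : 1/((N:ℝ)+1) ≤ 1/((n:ℝ)+1) :=
        one_div_le_one_div_of_le (by positivity)
          (by exact_mod_cast Nat.succ_le_succ (le_max_left _ _))
      have hqle' : (q : ℝ) ≤ 1/((n:ℝ)+1) := hqle.trans h1N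
      have hq1 : (q : ℝ) < 1 := lt_of_le_of_lt hqle' (lt_of_lt_of_le hn (min_le_right _ _))
      have hqu : (q : ℝ) < u := lt_of_le_of_lt hqle' (lt_of_lt_of_le hn (min_le_left _ _))
      have hfq := huP ⟨hq0, hqu⟩
      rw [Set.mem_setOf_eq, div_lt_iff_of_neg (Real.log_neg hq0 hq1)] at hfq
      have hgt2 : (q : ℝ) ^ (α + ε/2) < (μ (closedBall w (q : ℝ))).toReal := by
        rw [← Real.exp_log (hpos q hq0), Real.rpow_def_of_pos hq0]
        exact Real.exp_lt_exp.2 (by rw [mul_comm] at hfq; exact hfq)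
      calc ENNReal.ofReal ((q : ℝ) ^ (α + ε/2))
          ≤ ENNReal.ofReal (μ (closedBall w (q : ℝ))).toReal :=
            ENNReal.ofReal_le_ofReal hgt2.le
        _ = μ (closedBall w (q : ℝ)) := ENNReal.ofReal_toReal (measure_ne_top μ _)
  -- the union has full measure
  have hU : μ (⋃ N, Aset N) = 1 := by
    have hc : μ (⋃ N, Aset N)ᶜ = 0 := by
      rw [Set.compl_iUnion]
      simpa [ae_iff, Set.setOf_forall, ← Set.compl_def] using hae
    have hmU : MeasurableSet (⋃ N, Aset N) := MeasurableSet.iUnion hAmeas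
    have hcompl := measure_compl hmU (measure_ne_top μ _)
    rw [measure_univ, hc] at hcompl
    exact le_antisymm prob_le_one (tsub_eq_zero_iff_le.1 hcompl.symm)
  -- choose N
  have htend := tendsto_measure_iUnion_atTop (μ := μ) hAmono
  rw [hU] at htend
  have hlt1 : ENNReal.ofReal (1 - δ) < 1 := by
    rw [← ENNReal.ofReal_one]
    exact (ENNReal.ofReal_lt_ofReal_iff one_pos).2 (by linarith [hδ.1])
  obtain ⟨N, hN⟩ := (htend.eventually (lt_mem_nhds hlt1)).exists
  refine ⟨Aset N, hAmeas N, ?_, hN.le, ?_⟩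
  · exact Metric.isBounded_closedBall.subset Set.inter_subset_left
  · have hc1 : 1/((N:ℝ)+1) ≤ 1 := by
      rw [div_le_one (by positivity)]; linarith [Nat.cast_nonneg (α := ℝ) N]
    have hmb := minkowski_bound μ (show 0 < α + ε/2 by linarith)
      (show (0:ℝ) < 1/(N+1) by positivity) hc1 (show 0 < ε/2 by linarith)
      (A := Aset N) (fun x hx => hx.2)
    calc upperMinkowskiDim (Aset N) ≤ ENNReal.ofReal (α + ε/2 + ε/2) := hmb
      _ = ENNReal.ofReal (α + ε) := by ring_nf
      _ = ENNReal.ofReal α + ENNReal.ofReal ε := ENNReal.ofReal_add hα0 hε.le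
      _ = upperHausdorffDim μ + ENNReal.ofReal ε := by rw [hα, ENNReal.ofReal_toReal hsfin]
end

section
/- Consider the regularized least squares loss ℓ(w,(a,y)) = (aᵀw − y)²/2 + λ‖w‖²/2 on ℝ^d with λ > 0, data points z_i = (a_i, y_i) for i = 1,…,n, and R := max_i ‖a_i‖ < ∞. Assume the step-size satisfies 0 < η < 1/(R² + λ). Let μ be any Borel probability measure on ℝ^d invariant under the SGD iterated function system with batch size b (so m_b = n/b batches). Then dim̄_H μ ≤ log(n/b) / log(1/(1 − ηλ)). -/
open MeasureTheory Filter Set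
open scoped ENNReal NNReal Topology RealInnerProductSpace

set_option linter.unusedSectionVars false
set_option linter.unusedVariables false
set_option maxHeartbeats 1000000

section Analysis


variable {E : Type*} [NormedAddCommGroup E] [InnerProductSpace ℝ E] [CompleteSpace E]

lemma grad_lsq (aj : E) (yj lam : ℝ) (w : E) :
    HasGradientAt (fun w' : E => (⟪aj, w'⟫ - yj) ^ 2 / 2 + lam * ‖w'‖ ^ 2 / 2)
      ((⟪aj, w⟫ - yj) • aj + lam • w) w := by
  rw [hasGradientAt_iff_hasFDerivAt]
  have hg : HasFDerivAt (fun w' : E => ⟪aj, w'⟫ - yj) (innerSL ℝ aj) w :=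
    ((innerSL ℝ aj).hasFDerivAt (x := w)).sub_const yj
  have h1 : HasFDerivAt (fun w' : E => (⟪aj, w'⟫ - yj) ^ 2 / 2)
      ((⟪aj, w⟫ - yj) • (innerSL ℝ aj)) w := by
    have h2 := ((hg.mul hg).const_mul (2⁻¹ : ℝ))
    have : (fun w' : E => (⟪aj, w'⟫ - yj) ^ 2 / 2)
        = fun w' : E => (2⁻¹ : ℝ) * ((⟪aj, w'⟫ - yj) * (⟪aj, w'⟫ - yj)) := by
      ext u; ring
    rw [this]
    refine h2.congr_fderiv ?_
    ext u
    simp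
    ring
  have hin : HasFDerivAt (fun w' : E => ⟪w', w'⟫) (innerSL ℝ w + innerSL ℝ w) w := by
    have := (hasFDerivAt_id w).inner ℝ (hasFDerivAt_id w)
    refine this.congr_fderiv ?_
    ext u
    simp [real_inner_comm]
  have h2 : HasFDerivAt (fun w' : E => lam * ‖w'‖ ^ 2 / 2)
      ((lam / 2) • (innerSL ℝ w + innerSL ℝ w)) w := by
    have h3 := hin.const_mul (lam / 2)
    have : (fun w' : E => lam * ‖w'‖ ^ 2 / 2) = fun w' : E => (lam / 2) * ⟪w', w'⟫ := by
      ext u; rw [real_inner_self_eq_norm_sq]; ring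
    rw [this]; exact h3
  have := h1.add h2
  refine this.congr_fderiv ?_
  ext u
  simp [InnerProductSpace.toDual_apply_apply, inner_add_left, real_inner_smul_left, real_inner_comm w u]
  ring

lemma contr_ineq {ι : Type*} (s : Finset ι) (aa : ι → E) (R η lam : ℝ) (b : ℕ)
    (hb : 0 < b) (hcard : s.card = b)
    (hR : ∀ j ∈ s, ‖aa j‖ ≤ R) (hη : 0 < η) (hlam : 0 < lam)
    (hsmall : η * (R ^ 2 + lam) < 1) (w : E) :
    ‖(1 - η * lam) • w - (η / b) • ∑ j ∈ s, ⟪aa j, w⟫ • aa j‖ ≤ (1 - η * lam) * ‖w‖ := by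
  set r : ℝ := 1 - η * lam with hr
  have hR2 : (0:ℝ) ≤ R ^ 2 := sq_nonneg R
  have hr0 : 0 < r := by nlinarith [mul_nonneg hη.le hR2]
  set u : E := ∑ j ∈ s, ⟪aa j, w⟫ • aa j with hu
  set t : ℝ := η / b with ht
  have htpos : 0 < t := div_pos hη (by exact_mod_cast hb)
  -- inner products
  have hwu : ⟪w, u⟫ = ∑ j ∈ s, ⟪aa j, w⟫ ^ 2 := by
    rw [hu, inner_sum]
    refine Finset.sum_congr rfl fun j hj => ?_
    rw [real_inner_smul_right, real_inner_comm]; ring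
  have hwu0 : 0 ≤ ⟪w, u⟫ := by
    rw [hwu]; exact Finset.sum_nonneg fun j _ => sq_nonneg _
  -- norm of u squared bound
  have hRnn : s.Nonempty → 0 ≤ R := by
    rintro ⟨j, hj⟩; exact le_trans (norm_nonneg _) (hR j hj)
  have hub : ‖u‖ ^ 2 ≤ (b : ℝ) * R ^ 2 * ∑ j ∈ s, ⟪aa j, w⟫ ^ 2 := by
    rcases s.eq_empty_or_nonempty with rfl | hne
    · simp [hu]
    have hR0 : 0 ≤ R := hRnn hne
    have h1 : ‖u‖ ≤ ∑ j ∈ s, |⟪aa j, w⟫| * R := by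
      refine (norm_sum_le _ _).trans (Finset.sum_le_sum fun j hj => ?_)
      rw [norm_smul]
      exact mul_le_mul_of_nonneg_left (hR j hj) (abs_nonneg _)
    have h2 : (∑ j ∈ s, |⟪aa j, w⟫| * 1) ^ 2 ≤ (∑ j ∈ s, |⟪aa j, w⟫| ^ 2) * ∑ j ∈ s, (1:ℝ) ^ 2 :=
      Finset.sum_mul_sq_le_sq_mul_sq s _ _
    simp only [mul_one, one_pow, Finset.sum_const, hcard, nsmul_eq_mul, sq_abs] at h2
    have h3 : ‖u‖ ≤ (∑ j ∈ s, |⟪aa j, w⟫|) * R := by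
      simpa [Finset.sum_mul] using h1
    have h4 : ‖u‖ ^ 2 ≤ ((∑ j ∈ s, |⟪aa j, w⟫|) * R) ^ 2 := by
      have h0 : (0:ℝ) ≤ ‖u‖ := norm_nonneg _
      nlinarith
    calc ‖u‖ ^ 2 ≤ ((∑ j ∈ s, |⟪aa j, w⟫|) * R) ^ 2 := h4
      _ = (∑ j ∈ s, |⟪aa j, w⟫|) ^ 2 * R ^ 2 := by ring
      _ ≤ ((∑ j ∈ s, ⟪aa j, w⟫ ^ 2) * b) * R ^ 2 := by
          apply mul_le_mul_of_nonneg_right _ hR2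
          simpa [sq_abs] using h2
      _ = (b : ℝ) * R ^ 2 * ∑ j ∈ s, ⟪aa j, w⟫ ^ 2 := by ring
  -- expand the square
  have hsq : ‖r • w - t • u‖ ^ 2 ≤ (r * ‖w‖) ^ 2 := by
    have hexp : ‖r • w - t • u‖ ^ 2 = r ^ 2 * ‖w‖ ^ 2 - 2 * (r * t) * ⟪w, u⟫ + t ^ 2 * ‖u‖ ^ 2 := by
      rw [norm_sub_sq_real]
      rw [real_inner_smul_left, real_inner_smul_right, norm_smul, norm_smul]
      simp [abs_of_pos hr0, abs_of_pos htpos]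
      ring
    have htb : t * b = η := by
      rw [ht]; field_simp
    have h5 : t ^ 2 * ‖u‖ ^ 2 ≤ t * (η * R ^ 2) * ∑ j ∈ s, ⟪aa j, w⟫ ^ 2 := by
      calc t ^ 2 * ‖u‖ ^ 2 ≤ t ^ 2 * ((b : ℝ) * R ^ 2 * ∑ j ∈ s, ⟪aa j, w⟫ ^ 2) := by
            exact mul_le_mul_of_nonneg_left hub (sq_nonneg t)
        _ = t * (t * b * R ^ 2) * ∑ j ∈ s, ⟪aa j, w⟫ ^ 2 := by ring
        _ = t * (η * R ^ 2) * ∑ j ∈ s, ⟪aa j, w⟫ ^ 2 := by rw [htb]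
    have hc2r : η * R ^ 2 ≤ 2 * r := by nlinarith
    have hsum0 : 0 ≤ ∑ j ∈ s, ⟪aa j, w⟫ ^ 2 := Finset.sum_nonneg fun j _ => sq_nonneg _
    set S : ℝ := ∑ j ∈ s, ⟪aa j, w⟫ ^ 2 with hS
    have htS : 0 ≤ t * S := mul_nonneg htpos.le hsum0
    have h6 : t ^ 2 * ‖u‖ ^ 2 ≤ 2 * (r * t) * S := by
      refine h5.trans ?_
      have := mul_le_mul_of_nonneg_right hc2r htS
      nlinarith
    rw [hexp, hwu]
    nlinarith
  have h0 : (0:ℝ) ≤ r * ‖w‖ := mul_nonneg hr0.le (norm_nonneg _)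
  nlinarith [norm_nonneg (r • w - t • u)]

end Analysis

section IFS


variable {E : Type*} [NormedAddCommGroup E] [NormedSpace ℝ E]

/-- Iterated images of a starting set under an IFS. -/
def iterSets {m : ℕ} (h : Fin m → E → E) (B : Set E) : ℕ → Set E
  | 0 => B
  | (k+1) => ⋃ i, h i '' (iterSets h B k)

/-- Composition of IFS maps along a word. -/
def wordMap {m : ℕ} (h : Fin m → E → E) : (k : ℕ) → (Fin k → Fin m) → E → E
  | 0, _ => id
  | (k+1), w => h (w 0) ∘ wordMap h k (fun j => w j.succ)

lemma wordMap_lip {m : ℕ} {h : Fin m → E → E} {r : ℝ≥0} (hlip : ∀ i, LipschitzWith r (h i)) :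
    ∀ k (w : Fin k → Fin m), LipschitzWith (r ^ k) (wordMap h k w)
  | 0, _ => by simpa [wordMap] using LipschitzWith.id
  | (k+1), w => by
      have := (hlip (w 0)).comp (wordMap_lip hlip k fun j => w j.succ)
      rw [pow_succ, mul_comm]
      simpa [wordMap] using this

lemma iterSets_subset {m : ℕ} (h : Fin m → E → E) (B : Set E) :
    ∀ k, iterSets h B k ⊆ ⋃ w : Fin k → Fin m, wordMap h k w '' B := by
  intro k
  induction k with
  | zero =>
      intro x hx
      exact mem_iUnion.2 ⟨Fin.elim0, by simpa [wordMap, iterSets] using hx⟩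
  | succ k ih =>
      intro x hx
      obtain ⟨i, z, hz, rfl⟩ := by simpa [iterSets] using hx
      obtain ⟨w, u, hu, rfl⟩ := by simpa using ih hz
      refine mem_iUnion.2 ⟨Fin.cons i w, u, hu, ?_⟩
      show wordMap h (k+1) (Fin.cons i w) u = _
      simp only [wordMap, Fin.cons_zero, Fin.cons_succ, Function.comp_apply]

lemma ifs_core [FiniteDimensional ℝ E] [MeasurableSpace E] [BorelSpace E] {m : ℕ}
    (h : Fin m → E → E) {r : ℝ≥0} (hr0 : 0 < r) (hr1 : r < 1)
    (hlip : ∀ i, LipschitzWith r (h i))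
    (p : Fin m → ℝ≥0∞) (hpsum : ∑ i, p i = 1)
    (μ : Measure E) [IsProbabilityMeasure μ]
    (hinv : μ = ∑ i, p i • μ.map (h i))
    (ρ : ℝ) (hρ0 : 0 ≤ ρ)
    (hmaps : ∀ i, Set.MapsTo (h i) (Metric.closedBall 0 ρ) (Metric.closedBall 0 ρ)) :
    ∃ A : Set E, MeasurableSet A ∧ μ (Metric.closedBall 0 ρ) ≤ μ A ∧
      dimH A ≤ ENNReal.ofReal (Real.log m / Real.log (1 / (r : ℝ))) := by
  rcases Nat.eq_zero_or_pos m with rfl | hm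
  · simp at hpsum
  set B := Metric.closedBall (0 : E) ρ with hB
  -- compactness
  have hKc : ∀ k, IsCompact (iterSets h B k) := by
    intro k
    induction k with
    | zero => exact isCompact_closedBall _ _
    | succ k ih => exact isCompact_iUnion fun i => ih.image (hlip i).continuous
  -- antitonicity
  have hstep : ∀ k, iterSets h B (k + 1) ⊆ iterSets h B k := by
    intro k
    induction k with
    | zero => exact iUnion_subset fun i => (hmaps i).image_subset
    | succ k ih => exact iUnion_subset fun i =>
        (image_mono ih).trans (subset_iUnion (fun i' => h i' '' iterSets h B k) i)
  have hanti : Antitone (iterSets h B) := antitone_nat_of_succ_le hstep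
  -- measure lower bound
  have hmeaslb : ∀ k, μ B ≤ μ (iterSets h B k) := by
    intro k
    induction k with
    | zero => exact le_rfl
    | succ k ih =>
        have hms : MeasurableSet (iterSets h B (k + 1)) := (hKc _).measurableSet
        have hsub : ∀ i : Fin m, iterSets h B k ⊆ h i ⁻¹' iterSets h B (k + 1) := by
          intro i x hx
          exact mem_iUnion.2 ⟨i, mem_image_of_mem _ hx⟩
        calc μ B = ∑ i, p i * μ B := by rw [← Finset.sum_mul, hpsum, one_mul]
          _ ≤ ∑ i, p i * μ (h i ⁻¹' iterSets h B (k + 1)) :=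
              Finset.sum_le_sum fun i _ =>
                mul_le_mul_right (ih.trans (measure_mono (hsub i))) _
          _ = μ (iterSets h B (k + 1)) := by
              conv_rhs => rw [hinv]
              simp only [Measure.coe_finset_sum, Finset.sum_apply, Measure.smul_apply,
                smul_eq_mul]
              exact Finset.sum_congr rfl fun i _ => by
                rw [Measure.map_apply (hlip i).continuous.measurable hms]
  set A := ⋂ k, iterSets h B k with hA
  have hAm : MeasurableSet A := MeasurableSet.iInter fun k => (hKc k).measurableSet
  have hAμ : μ B ≤ μ A := by
    rw [hA, Directed.measure_iInter (fun k => (hKc k).measurableSet.nullMeasurableSet)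
      (hanti.directed_ge) ⟨0, measure_ne_top μ _⟩]
    exact le_iInf hmeaslb
  refine ⟨A, hAm, hAμ, ?_⟩
  -- dimension bound
  have hrpos : (0 : ℝ) < (r : ℝ) := hr0
  have hrlt1 : (r : ℝ) < 1 := hr1
  have hlog : 0 < Real.log (1 / (r : ℝ)) :=
    Real.log_pos (by rw [one_div]; exact (one_lt_inv₀ hrpos).2 hrlt1)
  have hm1 : (1 : ℝ) ≤ (m : ℝ) := by exact_mod_cast hm
  have hs0 : 0 ≤ Real.log m / Real.log (1 / (r : ℝ)) :=
    div_nonneg (Real.log_nonneg hm1) hlog.le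
  apply dimH_le
  intro d' hd'
  by_contra hlt
  push_neg at hlt
  have hsd : Real.log m / Real.log (1 / (r : ℝ)) < (d' : ℝ) := by
    rw [← ENNReal.ofReal_coe_nnreal] at hlt
    exact (ENNReal.ofReal_lt_ofReal_iff_of_nonneg hs0).1 hlt
  -- the key real inequality
  have hq_real : (m : ℝ) * (r : ℝ) ^ (d' : ℝ) < 1 := by
    have hlogm : Real.log m = (Real.log m / Real.log (1 / (r : ℝ))) * Real.log (1 / (r : ℝ)) := by
      field_simp
    have h2 : Real.log m < (d' : ℝ) * Real.log (1 / (r : ℝ)) := by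
      rw [hlogm]
      exact mul_lt_mul_of_pos_right hsd hlog
    have h3 : Real.log ((m : ℝ) * (r : ℝ) ^ (d' : ℝ)) < 0 := by
      rw [Real.log_mul (by positivity) (by positivity), Real.log_rpow hrpos]
      rw [one_div, Real.log_inv] at h2
      linarith
    have h4 : (0 : ℝ) < (m : ℝ) * (r : ℝ) ^ (d' : ℝ) := by positivity
    exact (Real.log_neg_iff h4).1 h3
  have hq : (m : ℝ≥0∞) * (r : ℝ≥0∞) ^ (d' : ℝ) < 1 := by
    rw [← ENNReal.coe_natCast, ← ENNReal.coe_rpow_of_ne_zero hr0.ne', ← ENNReal.coe_mul,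
      ← ENNReal.coe_one, ENNReal.coe_lt_coe, ← NNReal.coe_lt_coe]
    push_cast
    exact hq_real
  -- apply the covering bound
  have hdiamB : EMetric.diam B ≤ 2 * ENNReal.ofReal ρ := by
    rw [hB, ← Metric.emetric_closedBall hρ0]
    exact EMetric.diam_closedBall
  set c : ℝ≥0∞ := 2 * ENNReal.ofReal ρ with hc
  have hcne : c ≠ ∞ := by finiteness
  have hcover := Measure.hausdorffMeasure_le_liminf_sum (d' : ℝ) A
    (fun k : ℕ => c * (r : ℝ≥0∞) ^ k)
    (by
      have := ENNReal.Tendsto.const_mul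
        (ENNReal.tendsto_pow_atTop_nhds_zero_of_lt_one
          (show (r : ℝ≥0∞) < 1 by exact_mod_cast hr1)) (Or.inr hcne)
      simpa using this)
    (fun k w => wordMap h k w '' B)
    (Eventually.of_forall fun k w => by
      calc EMetric.diam (wordMap h k w '' B) ≤ (r ^ k : ℝ≥0) * EMetric.diam B :=
            (wordMap_lip hlip k w).ediam_image_le B
        _ ≤ (r : ℝ≥0∞) ^ k * c := by
            push_cast
            exact mul_le_mul_right hdiamB _
        _ = c * (r : ℝ≥0∞) ^ k := mul_comm _ _)
    (Eventually.of_forall fun k => (iInter_subset _ k).trans (iterSets_subset h B k))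
  -- bound the sums by a geometric sequence tending to zero
  set q : ℝ≥0∞ := (m : ℝ≥0∞) * (r : ℝ≥0∞) ^ (d' : ℝ) with hqdef
  have hbound : ∀ k : ℕ,
      (∑ w : Fin k → Fin m, EMetric.diam (wordMap h k w '' B) ^ (d' : ℝ))
        ≤ c ^ (d' : ℝ) * q ^ k := by
    intro k
    have h1 : ∀ w : Fin k → Fin m,
        EMetric.diam (wordMap h k w '' B) ^ (d' : ℝ) ≤ (c * (r : ℝ≥0∞) ^ k) ^ (d' : ℝ) := by
      intro w
      apply ENNReal.rpow_le_rpow _ d'.coe_nonneg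
      calc EMetric.diam (wordMap h k w '' B) ≤ (r ^ k : ℝ≥0) * EMetric.diam B :=
            (wordMap_lip hlip k w).ediam_image_le B
        _ ≤ (r : ℝ≥0∞) ^ k * c := by push_cast; exact mul_le_mul_right hdiamB _
        _ = c * (r : ℝ≥0∞) ^ k := mul_comm _ _
    calc (∑ w : Fin k → Fin m, EMetric.diam (wordMap h k w '' B) ^ (d' : ℝ))
        ≤ ∑ _w : Fin k → Fin m, (c * (r : ℝ≥0∞) ^ k) ^ (d' : ℝ) :=
          Finset.sum_le_sum fun w _ => h1 w
      _ = (m ^ k : ℕ) * (c * (r : ℝ≥0∞) ^ k) ^ (d' : ℝ) := by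
          rw [Finset.sum_const, Finset.card_univ]
          simp [Fintype.card_fun, nsmul_eq_mul]
      _ = c ^ (d' : ℝ) * q ^ k := by
          rw [ENNReal.mul_rpow_of_nonneg _ _ d'.coe_nonneg]
          rw [← ENNReal.rpow_natCast ((r : ℝ≥0∞)) k, ← ENNReal.rpow_mul, mul_comm (k : ℝ),
            ENNReal.rpow_mul, ENNReal.rpow_natCast]
          rw [hqdef, mul_pow]
          push_cast
          ring
  have hq0 : Tendsto (fun k : ℕ => c ^ (d' : ℝ) * q ^ k) atTop (𝓝 0) := by
    have hcd : c ^ (d' : ℝ) ≠ ∞ := ENNReal.rpow_ne_top_of_nonneg d'.coe_nonneg hcne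
    have := ENNReal.Tendsto.const_mul
      (ENNReal.tendsto_pow_atTop_nhds_zero_of_lt_one hq) (Or.inr hcd)
    simpa using this
  have hliminf : liminf
      (fun k : ℕ => ∑ w : Fin k → Fin m, EMetric.diam (wordMap h k w '' B) ^ (d' : ℝ))
      atTop ≤ 0 := by
    calc liminf _ atTop ≤ liminf (fun k : ℕ => c ^ (d' : ℝ) * q ^ k) atTop :=
          liminf_le_liminf (Eventually.of_forall hbound)
      _ = 0 := hq0.liminf_eq
  rw [hd'] at hcover
  exact absurd (hcover.trans hliminf) (by simp)

lemma ifs_upper_dim [FiniteDimensional ℝ E] [MeasurableSpace E] [BorelSpace E] {m : ℕ}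
    (h : Fin m → E → E) {r : ℝ≥0} (hr0 : 0 < r) (hr1 : r < 1)
    (hlip : ∀ i, LipschitzWith r (h i))
    (p : Fin m → ℝ≥0∞) (hpsum : ∑ i, p i = 1)
    (μ : Measure E) [IsProbabilityMeasure μ]
    (hinv : μ = ∑ i, p i • μ.map (h i)) :
    upperHausdorffDim μ ≤ ENNReal.ofReal (Real.log m / Real.log (1 / (r : ℝ))) := by
  rcases Nat.eq_zero_or_pos m with rfl | hm
  · simp at hpsum
  -- a uniform bound for the displacements of the origin
  set C : ℝ := ∑ i, ‖h i 0‖ with hC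
  have hC0 : 0 ≤ C := Finset.sum_nonneg fun i _ => norm_nonneg _
  have hCb : ∀ i, ‖h i 0‖ ≤ C :=
    fun i => Finset.single_le_sum (f := fun i => ‖h i 0‖) (fun j _ => norm_nonneg _)
      (Finset.mem_univ i)
  have hr1' : (0:ℝ) < 1 - (r : ℝ) := by
    have : (r : ℝ) < 1 := hr1
    linarith
  -- radii
  set ρ : ℕ → ℝ := fun l => max (C / (1 - (r : ℝ))) l with hρ
  have hρ0 : ∀ l, 0 ≤ ρ l := fun l =>
    le_trans (div_nonneg hC0 hr1'.le) (le_max_left _ _)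
  have hρl : ∀ l : ℕ, (l : ℝ) ≤ ρ l := fun l => le_max_right _ _
  have hmaps : ∀ l, ∀ i, Set.MapsTo (h i)
      (Metric.closedBall 0 (ρ l)) (Metric.closedBall 0 (ρ l)) := by
    intro l i x hx
    rw [Metric.mem_closedBall, dist_zero_right] at hx ⊢
    have h1 : dist (h i x) (h i 0) ≤ (r : ℝ) * dist x 0 := (hlip i).dist_le_mul x 0
    rw [dist_zero_right] at h1
    have h2 : ‖h i x‖ ≤ (r : ℝ) * ‖x‖ + C :=
      calc ‖h i x‖ ≤ dist (h i x) (h i 0) + ‖h i 0‖ := by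
            rw [dist_eq_norm]
            simpa using norm_add_le (h i x - h i 0) (h i 0)
        _ ≤ (r : ℝ) * ‖x‖ + C := add_le_add h1 (hCb i)
    have h3 : C ≤ (1 - (r : ℝ)) * ρ l := by
      rw [← div_le_iff₀' hr1']
      exact le_max_left _ _
    have h4 : (r : ℝ) * ‖x‖ ≤ (r : ℝ) * ρ l := mul_le_mul_of_nonneg_left hx r.coe_nonneg
    nlinarith
  choose A hAm hAμ hAdim using fun l : ℕ =>
    ifs_core h hr0 hr1 hlip p hpsum μ hinv (ρ l) (hρ0 l) (hmaps l)
  set U : Set E := ⋃ l, A l with hU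
  have hUm : MeasurableSet U := MeasurableSet.iUnion hAm
  have hUμ : μ U = 1 := by
    have hball : ∀ l : ℕ, μ (Metric.closedBall (0:E) l) ≤ μ U := fun l =>
      le_trans (measure_mono (Metric.closedBall_subset_closedBall (hρl l)))
        ((hAμ l).trans (measure_mono (subset_iUnion A l)))
    have hcov : ⋃ l : ℕ, Metric.closedBall (0:E) l = Set.univ := by
      ext x
      simp only [mem_iUnion, Set.mem_univ, iff_true]
      obtain ⟨l, hl⟩ := exists_nat_ge ‖x‖
      exact ⟨l, by simpa [Metric.mem_closedBall, dist_zero_right] using hl⟩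
    have hmono : Monotone (fun l : ℕ => Metric.closedBall (0:E) l) := fun i j hij =>
      Metric.closedBall_subset_closedBall (by exact_mod_cast hij)
    have h1 : μ (⋃ l : ℕ, Metric.closedBall (0:E) l) = ⨆ l : ℕ, μ (Metric.closedBall (0:E) l) :=
      hmono.directed_le.measure_iUnion
    have h2 : (1 : ℝ≥0∞) ≤ μ U := by
      rw [← measure_univ (μ := μ), ← hcov, h1]
      exact iSup_le hball
    exact le_antisymm prob_le_one h2
  calc upperHausdorffDim μ ≤ dimH U := by
        refine iInf_le_of_le U (iInf_le_of_le hUm (iInf_le_of_le hUμ le_rfl))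
    _ ≤ ENNReal.ofReal (Real.log m / Real.log (1 / (r : ℝ))) := by
        rw [hU, dimH_iUnion]
        exact iSup_le hAdim

end IFS

/-- Least squares, SGD: for the regularized least squares loss
`ℓ(w,(a,y)) = (aᵀw − y)²/2 + λ‖w‖²/2` with step-size `0 < η < 1/(R² + λ)`,
any invariant measure `μ` of the SGD iterated function system with batch size `b`
(`m_b = n/b` batches) satisfies `dim̄_H μ ≤ log(n/b) / log(1/(1 − ηλ))`. -/
theorem sgd_least_squares_hausdorff_dim_bound
    (d n b m : ℕ) (hb : 0 < b) (hnm : n = m * b)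
    (a : Fin n → EuclideanSpace ℝ (Fin d)) (y : Fin n → ℝ)
    (lam R η : ℝ) (hlam : 0 < lam)
    (hR : ∀ i, ‖a i‖ ≤ R)
    (hη : 0 < η) (hη' : η < 1 / (R ^ 2 + lam))
    (ℓ : EuclideanSpace ℝ (Fin d) → EuclideanSpace ℝ (Fin d) × ℝ → ℝ)
    (hℓ : ∀ w z, ℓ w z = (⟪z.1, w⟫ - z.2) ^ 2 / 2 + lam * ‖w‖ ^ 2 / 2)
    (S : Fin m → Finset (Fin n))
    (hcard : ∀ i, (S i).card = b)
    (hdisj : ∀ i j, i ≠ j → Disjoint (S i) (S j))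
    (hcover : ∀ j : Fin n, ∃ i, j ∈ S i)
    (p : Fin m → ℝ≥0∞) (hp : ∀ i, 0 < p i) (hpsum : ∑ i, p i = 1)
    (h : Fin m → EuclideanSpace ℝ (Fin d) → EuclideanSpace ℝ (Fin d))
    (hdef : ∀ i w, h i w = w - (η / b) • ∑ j ∈ S i, gradient (fun w' => ℓ w' (a j, y j)) w)
    (μ : Measure (EuclideanSpace ℝ (Fin d))) [IsProbabilityMeasure μ]
    (hinv : μ = ∑ i, p i • μ.map (h i)) :
    upperHausdorffDim μ ≤
      ENNReal.ofReal (Real.log ((n : ℝ) / (b : ℝ)) / Real.log (1 / (1 - η * lam))) := by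
  have hbR : (0:ℝ) < (b:ℝ) := by exact_mod_cast hb
  have hpos : (0:ℝ) < R ^ 2 + lam := by positivity
  have hsmall : η * (R ^ 2 + lam) < 1 := by
    rw [lt_div_iff₀ hpos] at hη'
    linarith
  have hR2 : (0:ℝ) ≤ R ^ 2 := sq_nonneg R
  have hr0' : (0:ℝ) < 1 - η * lam := by nlinarith [mul_nonneg hη.le hR2]
  set r : ℝ≥0 := ⟨1 - η * lam, hr0'.le⟩ with hrdef
  have hrcoe : (r : ℝ) = 1 - η * lam := rfl
  have hr0 : 0 < r := by rwa [← NNReal.coe_pos, hrcoe]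
  have hr1 : r < 1 := by
    rw [← NNReal.coe_lt_coe, hrcoe]
    have : 0 < η * lam := mul_pos hη hlam
    norm_num
    linarith
  -- closed form of the SGD maps
  have hclosed : ∀ i w, h i w =
      (1 - η * lam) • w - (η / b) • ∑ j ∈ S i, (⟪a j, w⟫ - y j) • a j := by
    intro i w
    rw [hdef]
    have hgrad : ∀ j ∈ S i, gradient (fun w' => ℓ w' (a j, y j)) w
        = (⟪a j, w⟫ - y j) • a j + lam • w := by
      intro j _
      have hfun : (fun w' => ℓ w' (a j, y j))
          = fun w' => (⟪a j, w'⟫ - y j) ^ 2 / 2 + lam * ‖w'‖ ^ 2 / 2 :=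
        funext fun w' => hℓ w' (a j, y j)
      rw [hfun]
      exact (grad_lsq (a j) (y j) lam w).gradient
    rw [Finset.sum_congr rfl hgrad, Finset.sum_add_distrib, Finset.sum_const, hcard i]
    have hbne : (b:ℝ) ≠ 0 := ne_of_gt hbR
    have hns : (b : ℕ) • (lam • w) = ((b:ℝ) * lam) • w := by
      rw [← Nat.cast_smul_eq_nsmul ℝ, smul_smul]
    rw [hns, smul_add, smul_smul]
    have hsc : η / (b:ℝ) * ((b:ℝ) * lam) = η * lam := by
      field_simp
    rw [hsc]
    module
  -- Lipschitz property
  have hlip : ∀ i, LipschitzWith r (h i) := by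
    intro i
    apply LipschitzWith.of_dist_le_mul
    intro u v
    rw [dist_eq_norm, dist_eq_norm, hclosed i u, hclosed i v]
    have hsum : (∑ j ∈ S i, (⟪a j, u⟫ - y j) • a j) - (∑ j ∈ S i, (⟪a j, v⟫ - y j) • a j)
        = ∑ j ∈ S i, ⟪a j, u - v⟫ • a j := by
      rw [← Finset.sum_sub_distrib]
      refine Finset.sum_congr rfl fun j _ => ?_
      rw [← sub_smul, inner_sub_right]
      ring_nf
    have heq : ((1 - η * lam) • u - (η / b) • ∑ j ∈ S i, (⟪a j, u⟫ - y j) • a j)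
        - ((1 - η * lam) • v - (η / b) • ∑ j ∈ S i, (⟪a j, v⟫ - y j) • a j)
        = (1 - η * lam) • (u - v) - (η / b) • ∑ j ∈ S i, ⟪a j, u - v⟫ • a j := by
      rw [← hsum]
      module
    rw [heq, hrcoe]
    exact contr_ineq (S i) a R η lam b hb (hcard i) (fun j _ => hR j) hη hlam hsmall (u - v)
  have hmain := ifs_upper_dim h hr0 hr1 hlip p hpsum μ hinv
  have hnb : (n : ℝ) / (b : ℝ) = (m : ℝ) := by
    rw [hnm]
    push_cast
    field_simp
  rw [hnb]
  rwa [hrcoe] at hmain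
end

section
/- Consider the non-convex robust regression loss ℓ(w,(a,y)) = ρ(y − ⟨w,a⟩) + λ_r‖w‖²/2 on ℝ^d, where ρ = ρ_exp is the exponential squared loss ρ_exp(t) = 1 − e^{−t²/t₀} with tuning parameter t₀ > 0, λ_r > 0, data points z_i = (a_i, y_i), and R := max_i ‖a_i‖ satisfying R < √(λ_r t₀ / 2). Assume the step-size satisfies 0 < η < 1/(λ_r + 2R²/t₀). Let μ be any Borel probability measure on ℝ^d invariant under the SGD iterated function system with batch size b (so m_b = n/b batches). Then dim̄_H μ ≤ log(n/b) / log(1/(1 − ηλ_r + 2ηR²/t₀)). -/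
open MeasureTheory Filter
open scoped ENNReal RealInnerProductSpace

open Set
open scoped NNReal Topology

noncomputable section SGDAux

/-- Composition of IFS maps along a word. -/
def sgdWordMap {α : Type*} {m : ℕ} (h : Fin m → α → α) : ∀ k : ℕ, (Fin k → Fin m) → α → α
  | 0, _ => id
  | k+1, w => h (w 0) ∘ sgdWordMap h k (fun j => w j.succ)

/-- Iterates of the IFS "union" operator applied to a set. -/
def sgdIterSet {α : Type*} {m : ℕ} (h : Fin m → α → α) (B : Set α) : ℕ → Set α
  | 0 => B
  | k+1 => ⋃ i, h i '' sgdIterSet h B k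

lemma sgdWordMap_cons {α : Type*} {m k : ℕ} (h : Fin m → α → α) (i : Fin m)
    (w : Fin k → Fin m) : sgdWordMap h (k+1) (Fin.cons i w) = h i ∘ sgdWordMap h k w := by
  set w' : Fin (k+1) → Fin m := Fin.cons i w with hw'
  have he : sgdWordMap h (k+1) w'
      = h (w' 0) ∘ sgdWordMap h k (fun j => w' j.succ) := rfl
  rw [he]
  have h0 : w' 0 = i := by simp [hw']
  have hs : (fun j => w' j.succ) = w := by funext j; simp [hw']
  rw [h0, hs]

lemma sgdWordMap_lipschitz {α : Type*} [PseudoEMetricSpace α] {m : ℕ} {h : Fin m → α → α}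
    {K : ℝ≥0} (hh : ∀ i, LipschitzWith K (h i)) :
    ∀ k w, LipschitzWith (K ^ k) (sgdWordMap h k w)
  | 0, w => by simpa [sgdWordMap] using LipschitzWith.id
  | k+1, w => by
    rw [pow_succ, mul_comm]
    exact (hh (w 0)).comp (sgdWordMap_lipschitz hh k _)

lemma sgdIterSet_subset_words {α : Type*} {m : ℕ} (h : Fin m → α → α) (B : Set α) :
    ∀ k, sgdIterSet h B k ⊆ ⋃ w : Fin k → Fin m, sgdWordMap h k w '' B
  | 0 => fun x hx => Set.mem_iUnion.2 ⟨Fin.elim0, by simpa [sgdWordMap, sgdIterSet] using hx⟩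
  | k+1 => by
    intro x hx
    simp only [sgdIterSet, Set.mem_iUnion] at hx
    obtain ⟨i, z, hz, rfl⟩ := hx
    obtain ⟨w, u, hu, rfl⟩ := Set.mem_iUnion.1 (sgdIterSet_subset_words h B k hz)
    exact Set.mem_iUnion.2 ⟨Fin.cons i w, u, hu, by rw [sgdWordMap_cons]; rfl⟩

lemma sgdIterSet_isCompact {α : Type*} [TopologicalSpace α] {m : ℕ} {h : Fin m → α → α}
    (hh : ∀ i, Continuous (h i)) {B : Set α} (hB : IsCompact B) :
    ∀ k, IsCompact (sgdIterSet h B k)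
  | 0 => hB
  | k+1 => isCompact_iUnion fun i => (sgdIterSet_isCompact hh hB k).image (hh i)

lemma sgdIterSet_succ_subset {α : Type*} {m : ℕ} {h : Fin m → α → α} {B : Set α}
    (hB : ∀ i : Fin m, Set.MapsTo (h i) B B) :
    ∀ k, sgdIterSet h B (k+1) ⊆ sgdIterSet h B k
  | 0 => Set.iUnion_subset fun i => (hB i).image_subset
  | k+1 => Set.iUnion_mono fun i => Set.image_mono (sgdIterSet_succ_subset hB k)

lemma sgd_key_ineq (u : ℝ) (hu : 0 ≤ u) : |1 - 2*u| * Real.exp (-u) ≤ 1 := by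
  rcases le_total u (1/2) with hcase | hcase
  · rw [abs_of_nonneg (by linarith)]
    have h1 : Real.exp (-u) ≤ 1 := Real.exp_le_one_iff.2 (by linarith)
    nlinarith [Real.exp_pos (-u)]
  · rw [abs_of_nonpos (by linarith)]
    have hA : u ≤ Real.exp (u - 1) := by
      have := Real.add_one_le_exp (u - 1); linarith
    have hB : (2:ℝ) ≤ Real.exp 1 := by
      have := Real.add_one_le_exp (1:ℝ); linarith
    have hprod : Real.exp (-u) * (Real.exp (u - 1) * Real.exp 1) = 1 := by
      rw [← Real.exp_add, ← Real.exp_add]; norm_num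
    have h2 : u * 2 ≤ Real.exp (u - 1) * Real.exp 1 :=
      mul_le_mul hA hB (by norm_num) (Real.exp_pos _).le
    nlinarith [Real.exp_pos (-u)]

lemma sgd_psi_hasDerivAt (c t₀ : ℝ) (s : ℝ) :
    HasDerivAt (fun s : ℝ => -(2 * (c - s) / t₀) * Real.exp (-(c - s)^2 / t₀))
      ((2 / t₀) * (1 - 2*(c - s)^2 / t₀) * Real.exp (-(c - s)^2 / t₀)) s := by
  have h1 : HasDerivAt (fun s : ℝ => c - s) (-1) s := by
    simpa using (hasDerivAt_id s).const_sub c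
  have hexp := ((h1.pow 2).neg.div_const t₀).exp
  have hfin := (((h1.const_mul (2:ℝ)).div_const t₀).neg).mul hexp
  refine HasDerivAt.congr_deriv hfin ?_
  simp only [Pi.neg_apply, Pi.pow_apply]
  norm_num
  ring

lemma sgd_psi_lipschitz (c t₀ : ℝ) (ht₀ : 0 < t₀) (s s' : ℝ) :
    |(-(2 * (c - s) / t₀) * Real.exp (-(c - s)^2 / t₀))
      - (-(2 * (c - s') / t₀) * Real.exp (-(c - s')^2 / t₀))| ≤ (2 / t₀) * |s - s'| := by
  have hb : ∀ x : ℝ, |(2 / t₀) * (1 - 2*(c - x)^2 / t₀) * Real.exp (-(c - x)^2 / t₀)| ≤ 2 / t₀ := by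
    intro x
    have hu0 : 0 ≤ (c - x)^2 / t₀ := div_nonneg (sq_nonneg _) ht₀.le
    have hkey := sgd_key_ineq ((c - x)^2 / t₀) hu0
    have h2t : 0 < 2 / t₀ := by positivity
    have hrw : (2 / t₀) * (1 - 2*(c - x)^2 / t₀) * Real.exp (-(c - x)^2 / t₀)
        = (2 / t₀) * ((1 - 2*((c - x)^2 / t₀)) * Real.exp (-((c - x)^2 / t₀))) := by
      rw [neg_div]; ring
    rw [hrw, abs_mul, abs_of_pos h2t, abs_mul, abs_of_pos (Real.exp_pos _)]
    have := mul_le_mul_of_nonneg_left hkey h2t.le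
    simpa using this
  have hmvt := Convex.norm_image_sub_le_of_norm_hasDerivWithin_le
    (f := fun x : ℝ => -(2 * (c - x) / t₀) * Real.exp (-(c - x)^2 / t₀))
    (f' := fun x => (2 / t₀) * (1 - 2*(c - x)^2 / t₀) * Real.exp (-(c - x)^2 / t₀))
    (s := Set.univ) (C := 2 / t₀)
    (fun x _ => (sgd_psi_hasDerivAt c t₀ x).hasDerivWithinAt)
    (fun x _ => by rw [Real.norm_eq_abs]; exact hb x) convex_univ (Set.mem_univ s')
    (Set.mem_univ s)
  simpa [Real.norm_eq_abs] using hmvt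

lemma sgd_gradient_loss {dd : ℕ} (a : EuclideanSpace ℝ (Fin dd)) (c lamr t₀ : ℝ)
    (w : EuclideanSpace ℝ (Fin dd)) :
    HasGradientAt (fun w' => (1 - Real.exp (-(c - ⟪w', a⟫)^2 / t₀)) + lamr * ‖w'‖^2 / 2)
      ((-(2 * (c - ⟪w, a⟫) / t₀) * Real.exp (-(c - ⟪w, a⟫)^2 / t₀)) • a + lamr • w) w := by
  rw [hasGradientAt_iff_hasFDerivAt]
  have hfun : (fun w' : EuclideanSpace ℝ (Fin dd) =>
      (1 - Real.exp (-(c - ⟪w', a⟫)^2 / t₀)) + lamr * ‖w'‖^2 / 2)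
      = fun w' => (1 - Real.exp (-(c - ⟪w', a⟫)^2 / t₀)) + (lamr/2) * ⟪w', w'⟫ := by
    funext w'; rw [real_inner_self_eq_norm_sq]; ring
  rw [hfun]
  have hB : HasFDerivAt (fun w' : EuclideanSpace ℝ (Fin dd) => ⟪w', a⟫) (innerSL ℝ a) w := by
    have hfe : (fun w' : EuclideanSpace ℝ (Fin dd) => ⟪w', a⟫)
        = fun w' => (innerSL ℝ a) w' := by
      funext w'; exact real_inner_comm _ _
    rw [hfe]; exact (innerSL ℝ a).hasFDerivAt
  have h1' : HasDerivAt (fun t : ℝ => c - t) (-1) ⟪w, a⟫ := by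
    simpa using (hasDerivAt_id (⟪w, a⟫ : ℝ)).const_sub c
  have hexp := ((h1'.pow 2).neg.div_const t₀).exp
  have hG : HasDerivAt (fun t : ℝ => 1 - Real.exp (-(c - t)^2 / t₀))
      (-(2 * (c - ⟪w, a⟫) / t₀) * Real.exp (-(c - ⟪w, a⟫)^2 / t₀)) ⟪w, a⟫ := by
    have := hexp.const_sub 1
    refine HasDerivAt.congr_deriv this ?_
    simp only [Pi.neg_apply, Pi.pow_apply]
    norm_num
    ring
  have h1 := hG.comp_hasFDerivAt w hB
  have h2 := (hasFDerivAt_id w).inner ℝ (hasFDerivAt_id w)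
  have h3 := h2.const_mul (lamr/2)
  have hsum := h1.add h3
  refine HasFDerivAt.congr_fderiv hsum ?_
  apply ContinuousLinearMap.ext
  intro v
  simp only [InnerProductSpace.toDual_apply_apply, inner_add_left, real_inner_smul_left,
    ContinuousLinearMap.add_apply, ContinuousLinearMap.smul_apply, innerSL_apply_apply,
    ContinuousLinearMap.comp_apply, ContinuousLinearMap.prod_apply, ContinuousLinearMap.id_apply,
    fderivInnerCLM_apply, smul_eq_mul, id_eq, real_inner_comm w v]
  ring

end SGDAux

/-- Non-convex robust regression, SGD: for the loss
`ℓ(w,(a,y)) = ρ_exp(y − ⟨w,a⟩) + λ_r‖w‖²/2` with `ρ_exp(t) = 1 − e^{−t²/t₀}`,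
`R = max_i ‖a_i‖ < √(λ_r t₀/2)` and step-size `0 < η < 1/(λ_r + 2R²/t₀)`,
any invariant measure `μ` of the SGD iterated function system with batch size `b`
satisfies `dim̄_H μ ≤ log(n/b) / log(1/(1 − ηλ_r + 2ηR²/t₀))`. -/
theorem sgd_robust_regression_hausdorff_dim_bound
    (d n b m : ℕ) (hb : 0 < b) (hnm : n = m * b)
    (a : Fin n → EuclideanSpace ℝ (Fin d)) (y : Fin n → ℝ)
    (lamr t₀ R η : ℝ) (hlamr : 0 < lamr) (ht₀ : 0 < t₀)
    (hR : ∀ i, ‖a i‖ ≤ R) (hR0 : 0 ≤ R) (hRbound : R < Real.sqrt (lamr * t₀ / 2))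
    (hη : 0 < η) (hη' : η < 1 / (lamr + 2 * R ^ 2 / t₀))
    (ℓ : EuclideanSpace ℝ (Fin d) → EuclideanSpace ℝ (Fin d) × ℝ → ℝ)
    (hℓ : ∀ w z, ℓ w z = (1 - Real.exp (-(z.2 - ⟪w, z.1⟫) ^ 2 / t₀)) + lamr * ‖w‖ ^ 2 / 2)
    (S : Fin m → Finset (Fin n))
    (hcard : ∀ i, (S i).card = b)
    (hdisj : ∀ i j, i ≠ j → Disjoint (S i) (S j))
    (hcover : ∀ j : Fin n, ∃ i, j ∈ S i)
    (p : Fin m → ℝ≥0∞) (hp : ∀ i, 0 < p i) (hpsum : ∑ i, p i = 1)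
    (h : Fin m → EuclideanSpace ℝ (Fin d) → EuclideanSpace ℝ (Fin d))
    (hdef : ∀ i w, h i w = w - (η / b) • ∑ j ∈ S i, gradient (fun w' => ℓ w' (a j, y j)) w)
    (μ : Measure (EuclideanSpace ℝ (Fin d))) [IsProbabilityMeasure μ]
    (hinv : μ = ∑ i, p i • μ.map (h i)) :
    upperHausdorffDim μ ≤
      ENNReal.ofReal (Real.log ((n : ℝ) / (b : ℝ)) /
        Real.log (1 / (1 - η * lamr + 2 * η * R ^ 2 / t₀))) := by
  classical
  set L : ℝ := 1 - η * lamr + 2 * η * R ^ 2 / t₀ with hLdef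
  have hRt : R ^ 2 < lamr * t₀ / 2 := by
    have hs := Real.sq_sqrt (by positivity : (0:ℝ) ≤ lamr * t₀ / 2)
    nlinarith [Real.sqrt_nonneg (lamr * t₀ / 2)]
  have hden : 0 < lamr + 2 * R ^ 2 / t₀ := by positivity
  have hηsum : η * (lamr + 2 * R ^ 2 / t₀) < 1 := by
    rw [lt_div_iff₀ hden] at hη'
    linarith
  have hηlam : η * lamr < 1 := by nlinarith [sq_nonneg R, div_nonneg (by positivity : (0:ℝ) ≤ 2 * R ^ 2) ht₀.le]
  have hL0 : 0 < L := by
    have h2 : 0 ≤ 2 * η * R ^ 2 / t₀ := by positivity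
    rw [hLdef]; linarith
  have hL1 : L < 1 := by
    have h2 : 2 * R ^ 2 / t₀ < lamr := by rw [div_lt_iff₀ ht₀]; nlinarith
    have h3 := mul_lt_mul_of_pos_left h2 hη
    rw [hLdef]
    have : 2 * η * R ^ 2 / t₀ = η * (2 * R ^ 2 / t₀) := by ring
    rw [this]; linarith
  have hLnn : (0:ℝ) ≤ L := hL0.le
  have hm : 0 < m := by
    rcases Nat.eq_zero_or_pos m with hm0 | hm0
    · subst hm0; simp at hpsum
    · exact hm0
  haveI : Nonempty (Fin m) := ⟨⟨0, hm⟩⟩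
  have hbR : (0:ℝ) < b := by exact_mod_cast hb
  have hnb : (n:ℝ) / (b:ℝ) = (m:ℝ) := by
    subst hnm; push_cast; field_simp
  -- gradient computation
  set ψ : Fin n → ℝ → ℝ :=
    fun j s => -(2 * (y j - s) / t₀) * Real.exp (-(y j - s)^2 / t₀) with hψ
  have hgrad : ∀ (j : Fin n) (w : EuclideanSpace ℝ (Fin d)),
      gradient (fun w' => ℓ w' (a j, y j)) w = ψ j ⟪w, a j⟫ • a j + lamr • w := by
    intro j w
    have hfe : (fun w' => ℓ w' (a j, y j))
        = fun w' : EuclideanSpace ℝ (Fin d) =>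
            (1 - Real.exp (-(y j - ⟪w', a j⟫)^2 / t₀)) + lamr * ‖w'‖^2 / 2 := by
      funext w'; exact hℓ w' (a j, y j)
    rw [hfe]
    exact (sgd_gradient_loss (a j) (y j) lamr t₀ w).gradient
  -- Lipschitz bound
  have hLip : ∀ i, LipschitzWith L.toNNReal (h i) := by
    intro i
    apply LipschitzWith.of_dist_le_mul
    intro w w'
    rw [dist_eq_norm, dist_eq_norm, Real.coe_toNNReal _ hLnn]
    have hkey : h i w - h i w' = (1 - η * lamr) • (w - w')
        - (η / b) • ∑ j ∈ S i, (ψ j ⟪w, a j⟫ - ψ j ⟪w', a j⟫) • a j := by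
      rw [hdef i w, hdef i w']
      simp only [hgrad, sub_smul, Finset.sum_sub_distrib, Finset.sum_add_distrib,
        Finset.sum_const, hcard i]
      simp only [← Nat.cast_smul_eq_nsmul ℝ]
      match_scalars <;> (field_simp; try ring)
    rw [hkey]
    have hterm : ∀ j ∈ S i, ‖(ψ j ⟪w, a j⟫ - ψ j ⟪w', a j⟫) • a j‖
        ≤ (2 / t₀) * R * R * ‖w - w'‖ := by
      intro j _
      rw [norm_smul, Real.norm_eq_abs]
      have h1 : |ψ j ⟪w, a j⟫ - ψ j ⟪w', a j⟫| ≤ (2 / t₀) * |⟪w, a j⟫ - ⟪w', a j⟫| :=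
        sgd_psi_lipschitz (y j) t₀ ht₀ _ _
      have h2 : |⟪w, a j⟫ - ⟪w', a j⟫| ≤ ‖w - w'‖ * R := by
        rw [← inner_sub_left]
        calc |⟪w - w', a j⟫| ≤ ‖w - w'‖ * ‖a j‖ := abs_real_inner_le_norm _ _
          _ ≤ ‖w - w'‖ * R := mul_le_mul_of_nonneg_left (hR j) (norm_nonneg _)
      have h3 : ‖a j‖ ≤ R := hR j
      have h4 : (0:ℝ) ≤ 2 / t₀ := by positivity
      calc |ψ j ⟪w, a j⟫ - ψ j ⟪w', a j⟫| * ‖a j‖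
          ≤ ((2 / t₀) * |⟪w, a j⟫ - ⟪w', a j⟫|) * ‖a j‖ :=
            mul_le_mul_of_nonneg_right h1 (norm_nonneg _)
        _ = (2 / t₀) * (|⟪w, a j⟫ - ⟪w', a j⟫| * ‖a j‖) := by ring
        _ ≤ (2 / t₀) * ((‖w - w'‖ * R) * R) :=
            mul_le_mul_of_nonneg_left
              (mul_le_mul h2 h3 (norm_nonneg _) (mul_nonneg (norm_nonneg _) hR0)) h4
        _ = (2 / t₀) * R * R * ‖w - w'‖ := by ring
    calc ‖(1 - η * lamr) • (w - w')
          - (η / b) • ∑ j ∈ S i, (ψ j ⟪w, a j⟫ - ψ j ⟪w', a j⟫) • a j‖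
        ≤ ‖(1 - η * lamr) • (w - w')‖
          + ‖(η / b) • ∑ j ∈ S i, (ψ j ⟪w, a j⟫ - ψ j ⟪w', a j⟫) • a j‖ := norm_sub_le _ _
      _ ≤ (1 - η * lamr) * ‖w - w'‖
          + (η / b) * ((S i).card • ((2 / t₀) * R * R * ‖w - w'‖)) := by
          have e1 : ‖((1 - η * lamr):ℝ) • (w - w')‖ = (1 - η * lamr) * ‖w - w'‖ := by
            rw [norm_smul, Real.norm_eq_abs, abs_of_nonneg (by linarith)]
          have e2 : ‖((η / b):ℝ) • ∑ j ∈ S i, (ψ j ⟪w, a j⟫ - ψ j ⟪w', a j⟫) • a j‖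
              ≤ (η / b) * ((S i).card • ((2 / t₀) * R * R * ‖w - w'‖)) := by
            rw [norm_smul, Real.norm_eq_abs, abs_of_nonneg (by positivity)]
            exact mul_le_mul_of_nonneg_left
              ((norm_sum_le _ _).trans (Finset.sum_le_card_nsmul _ _ _ hterm)) (by positivity)
          rw [e1]; exact add_le_add le_rfl e2
      _ = L * ‖w - w'‖ := by
          rw [hcard i, nsmul_eq_mul, hLdef]
          field_simp
  have hcont : ∀ i, Continuous (h i) := fun i => (hLip i).continuous
  have hmeasmap : ∀ i, Measurable (h i) := fun i => (hcont i).measurable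
  have happly : ∀ s : Set (EuclideanSpace ℝ (Fin d)), MeasurableSet s →
      μ s = ∑ i, p i * μ (h i ⁻¹' s) := by
    intro s hs
    conv_lhs => rw [hinv]
    rw [Measure.finset_sum_apply]
    refine Finset.sum_congr rfl fun i _ => ?_
    rw [Measure.smul_apply, Measure.map_apply (hmeasmap i) hs, smul_eq_mul]
  obtain ⟨C₀, hC₀⟩ : ∃ C, ∀ i, ‖h i 0‖ ≤ C :=
    ⟨Finset.univ.sup' Finset.univ_nonempty (fun i => ‖h i 0‖),
      fun i => Finset.le_sup' (fun i => ‖h i 0‖) (Finset.mem_univ i)⟩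
  set r : ℕ → ℝ := fun ρ => max (ρ:ℝ) (C₀ / (1 - L)) with hrdef
  have hmaps : ∀ (ρ : ℕ) (i : Fin m),
      Set.MapsTo (h i) (Metric.closedBall 0 (r ρ)) (Metric.closedBall 0 (r ρ)) := by
    intro ρ i x hx
    rw [Metric.mem_closedBall, dist_zero_right] at hx ⊢
    have hlx : ‖h i x - h i 0‖ ≤ L * ‖x‖ := by
      have hh := (hLip i).dist_le_mul x 0
      rwa [dist_eq_norm, dist_zero_right, Real.coe_toNNReal _ hLnn] at hh
    have hC : C₀ ≤ (1 - L) * r ρ := by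
      have hrr : C₀ / (1 - L) ≤ r ρ := le_max_right (ρ:ℝ) (C₀ / (1 - L))
      rw [div_le_iff₀ (by linarith : (0:ℝ) < 1 - L)] at hrr
      linarith
    have h5 : ‖h i x‖ ≤ L * ‖x‖ + C₀ := by
      have h4 := norm_add_le (h i x - h i 0) (h i 0)
      simp only [sub_add_cancel] at h4
      linarith [hC₀ i]
    have hLr : L * ‖x‖ ≤ L * r ρ := mul_le_mul_of_nonneg_left hx hLnn
    linarith
  set Bρ : ℕ → Set (EuclideanSpace ℝ (Fin d)) :=
    fun ρ => Metric.closedBall (0 : EuclideanSpace ℝ (Fin d)) (r ρ) with hBdef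
  have hBcompact : ∀ ρ, IsCompact (Bρ ρ) := fun ρ => isCompact_closedBall _ _
  set A : ℕ → Set (EuclideanSpace ℝ (Fin d)) :=
    fun ρ => ⋂ k, sgdIterSet h (Bρ ρ) k with hAdef
  have hIcompact : ∀ ρ k, IsCompact (sgdIterSet h (Bρ ρ) k) :=
    fun ρ k => sgdIterSet_isCompact hcont (hBcompact ρ) k
  have hImeas : ∀ ρ k, MeasurableSet (sgdIterSet h (Bρ ρ) k) :=
    fun ρ k => (hIcompact ρ k).isClosed.measurableSet
  have hAmeas : ∀ ρ, MeasurableSet (A ρ) := fun ρ => MeasurableSet.iInter fun k => hImeas ρ k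
  have hanti : ∀ ρ, Antitone (fun k => sgdIterSet h (Bρ ρ) k) := fun ρ =>
    antitone_nat_of_succ_le fun k => sgdIterSet_succ_subset (fun i => hmaps ρ i) k
  have hμA : ∀ ρ, μ (Bρ ρ) ≤ μ (A ρ) := by
    intro ρ
    have hmono : ∀ k, μ (Bρ ρ) ≤ μ (sgdIterSet h (Bρ ρ) k) := by
      intro k
      induction k with
      | zero => exact le_rfl
      | succ k ih =>
        have hsubset : ∀ i : Fin m,
            sgdIterSet h (Bρ ρ) k ⊆ h i ⁻¹' (sgdIterSet h (Bρ ρ) (k+1)) := by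
          intro i x hx
          exact Set.mem_iUnion.2 ⟨i, Set.mem_image_of_mem _ hx⟩
        calc μ (Bρ ρ) ≤ μ (sgdIterSet h (Bρ ρ) k) := ih
          _ = (∑ i, p i) * μ (sgdIterSet h (Bρ ρ) k) := by rw [hpsum, one_mul]
          _ = ∑ i, p i * μ (sgdIterSet h (Bρ ρ) k) := Finset.sum_mul _ _ _
          _ ≤ ∑ i, p i * μ (h i ⁻¹' sgdIterSet h (Bρ ρ) (k+1)) :=
              Finset.sum_le_sum fun i _ => mul_le_mul_right (measure_mono (hsubset i)) _
          _ = μ (sgdIterSet h (Bρ ρ) (k+1)) := (happly _ (hImeas ρ (k+1))).symm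
    have htd := tendsto_measure_iInter_atTop
      (fun k => (hImeas ρ k).nullMeasurableSet) (hanti ρ) ⟨0, measure_ne_top μ _⟩
    exact ge_of_tendsto htd (Filter.Eventually.of_forall hmono)
  set sE : ℝ≥0∞ := ENNReal.ofReal (Real.log ((n:ℝ)/(b:ℝ)) / Real.log (1 / L)) with hsE
  have hdim : ∀ ρ, dimH (A ρ) ≤ sE := by
    intro ρ
    apply dimH_le
    intro d' hd'
    by_contra hgt
    push_neg at hgt
    have hzero : μH[(d' : ℝ)] (A ρ) = 0 := by
      set K : ℝ≥0 := L.toNNReal with hKdef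
      have hKlt : (K : ℝ≥0∞) < 1 := by
        rw [← ENNReal.coe_one, ENNReal.coe_lt_coe, hKdef, ← Real.toNNReal_one]
        exact (Real.toNNReal_lt_toNNReal_iff (by norm_num)).2 hL1
      set D : ℝ≥0∞ := EMetric.diam (Bρ ρ) with hD
      have hDne : D ≠ ∞ := Metric.isBounded_closedBall.ediam_ne_top
      have hrt : Tendsto (fun k : ℕ => (K:ℝ≥0∞)^k * D) atTop (𝓝 0) := by
        have := ENNReal.Tendsto.mul_const
          (ENNReal.tendsto_pow_atTop_nhds_zero_of_lt_one hKlt) (Or.inr hDne)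
        simpa using this
      have hcov := Measure.hausdorffMeasure_le_liminf_sum (d':ℝ) (A ρ) (fun k => (K:ℝ≥0∞)^k * D) hrt
        (fun k w => sgdWordMap h k w '' (Bρ ρ))
        (Filter.Eventually.of_forall fun k w => by
          have := (sgdWordMap_lipschitz hLip k w).ediam_image_le (Bρ ρ)
          simp only [ENNReal.coe_pow] at this; exact this)
        (Filter.Eventually.of_forall fun k =>
          (Set.iInter_subset _ k).trans (sgdIterSet_subset_words h (Bρ ρ) k))
      refine le_antisymm (hcov.trans ?_) zero_le
      set c : ℝ≥0∞ := (m : ℝ≥0∞) * (K:ℝ≥0∞) ^ (d':ℝ) with hc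
      have hd'R : Real.log ((n:ℝ)/(b:ℝ)) / Real.log (1/L) < (d':ℝ) := by
        by_contra hcon
        push_neg at hcon
        have : (d' : ℝ≥0∞) ≤ sE := by
          rw [hsE, ← ENNReal.ofReal_coe_nnreal]
          exact ENNReal.ofReal_le_ofReal hcon
        exact absurd this (not_le_of_gt hgt)
      rw [hnb] at hd'R
      have hlogL : Real.log (1/L) = - Real.log L := by rw [one_div, Real.log_inv]
      have hlogLpos : 0 < - Real.log L := by
        rw [neg_pos]; exact Real.log_neg hL0 hL1
      have hmul : Real.log m < (d':ℝ) * (- Real.log L) := by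
        rw [hlogL] at hd'R
        have := (div_lt_iff₀ hlogLpos).1 hd'R
        linarith
      have hmL : (m:ℝ) * L ^ (d':ℝ) < 1 := by
        have hpos : (0:ℝ) < (m:ℝ) * L ^ (d':ℝ) := by
          have := Real.rpow_pos_of_pos hL0 (d':ℝ)
          have hmpos : (0:ℝ) < m := by exact_mod_cast hm
          positivity
        have hlog : Real.log ((m:ℝ) * L ^ (d':ℝ)) < 0 := by
          rw [Real.log_mul (by positivity) (by positivity), Real.log_rpow hL0]
          linarith
        exact (Real.log_neg_iff hpos).1 hlog
      have hc1 : c < 1 := by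
        have hKofReal : (K : ℝ≥0∞) = ENNReal.ofReal L := rfl
        have hceq : c = ENNReal.ofReal ((m:ℝ) * L ^ (d':ℝ)) := by
          rw [hc, hKofReal, ENNReal.ofReal_rpow_of_pos hL0,
            ← ENNReal.ofReal_natCast m, ← ENNReal.ofReal_mul (by positivity)]
        rw [hceq, ← ENNReal.ofReal_one]
        exact (ENNReal.ofReal_lt_ofReal_iff (by norm_num)).2 hmL
      have hDd : D ^ (d':ℝ) ≠ ∞ := ENNReal.rpow_ne_top_of_nonneg d'.coe_nonneg hDne
      have hbound : ∀ k : ℕ,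
          (∑ w : Fin k → Fin m, EMetric.diam (sgdWordMap h k w '' (Bρ ρ)) ^ (d':ℝ))
            ≤ c^k * D^(d':ℝ) := by
        intro k
        have hKpow : ((K:ℝ≥0∞)^k) ≠ ∞ := ENNReal.pow_ne_top ENNReal.coe_ne_top
        calc (∑ w : Fin k → Fin m, EMetric.diam (sgdWordMap h k w '' (Bρ ρ)) ^ (d':ℝ))
            ≤ ∑ _w : Fin k → Fin m, ((K:ℝ≥0∞)^k * D)^(d':ℝ) :=
              Finset.sum_le_sum fun w _ => by
                refine ENNReal.rpow_le_rpow ?_ d'.coe_nonneg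
                have := (sgdWordMap_lipschitz hLip k w).ediam_image_le (Bρ ρ)
                simp only [ENNReal.coe_pow] at this; exact this
          _ = (Fintype.card (Fin k → Fin m)) * ((K:ℝ≥0∞)^k * D)^(d':ℝ) := by
              rw [Finset.sum_const, Finset.card_univ, nsmul_eq_mul]
          _ = c^k * D^(d':ℝ) := by
              have hcard' : (Fintype.card (Fin k → Fin m) : ℝ≥0∞) = (m:ℝ≥0∞)^k := by
                rw [Fintype.card_fun]
                push_cast [Fintype.card_fin]
                ring
              have hKd : (((K:ℝ≥0∞))^k)^(d':ℝ) = (((K:ℝ≥0∞))^(d':ℝ))^k := by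
                rw [← ENNReal.rpow_natCast ((K:ℝ≥0∞)) k, ← ENNReal.rpow_mul,
                  mul_comm, ENNReal.rpow_mul, ENNReal.rpow_natCast]
              rw [hcard', ENNReal.mul_rpow_of_ne_top hKpow hDne, hKd, hc, mul_pow, ← mul_assoc]
      have htend0 : Tendsto (fun k : ℕ => c^k * D^(d':ℝ)) atTop (𝓝 0) := by
        have := ENNReal.Tendsto.mul_const
          (ENNReal.tendsto_pow_atTop_nhds_zero_of_lt_one hc1) (Or.inr hDd)
        simpa using this
      calc liminf (fun k => ∑ w : Fin k → Fin m,
              EMetric.diam (sgdWordMap h k w '' (Bρ ρ)) ^ (d':ℝ)) atTop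
          ≤ liminf (fun k => c^k * D^(d':ℝ)) atTop :=
            liminf_le_liminf (Filter.Eventually.of_forall hbound)
        _ = 0 := htend0.liminf_eq
    rw [hzero] at hd'
    exact ENNReal.zero_ne_top hd'
  set Atot : Set (EuclideanSpace ℝ (Fin d)) := ⋃ ρ : ℕ, A ρ with hAtot
  have hAtotMeas : MeasurableSet Atot := MeasurableSet.iUnion hAmeas
  have hμAtot : μ Atot = 1 := by
    refine le_antisymm prob_le_one ?_
    have hsup : ∀ ρ : ℕ, μ (Metric.closedBall (0 : EuclideanSpace ℝ (Fin d)) (ρ:ℝ)) ≤ μ Atot := by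
      intro ρ
      calc μ (Metric.closedBall (0 : EuclideanSpace ℝ (Fin d)) (ρ:ℝ))
          ≤ μ (Bρ ρ) := measure_mono (Metric.closedBall_subset_closedBall (le_max_left _ _))
        _ ≤ μ (A ρ) := hμA ρ
        _ ≤ μ Atot := measure_mono (Set.subset_iUnion _ ρ)
    have huniv : (⋃ ρ : ℕ, Metric.closedBall (0 : EuclideanSpace ℝ (Fin d)) (ρ:ℝ)) = Set.univ := by
      ext x
      simp only [Set.mem_iUnion, Metric.mem_closedBall, dist_zero_right, Set.mem_univ, iff_true]
      exact exists_nat_ge ‖x‖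
    have hmono2 : Monotone (fun ρ : ℕ => Metric.closedBall (0 : EuclideanSpace ℝ (Fin d)) (ρ:ℝ)) :=
      fun i j hij => Metric.closedBall_subset_closedBall (by exact_mod_cast hij)
    have h1 : (1:ℝ≥0∞) = μ (⋃ ρ : ℕ, Metric.closedBall (0 : EuclideanSpace ℝ (Fin d)) (ρ:ℝ)) := by
      rw [huniv, measure_univ]
    rw [h1, hmono2.measure_iUnion]
    exact iSup_le hsup
  have hdimAtot : dimH Atot ≤ sE := by
    rw [hAtot, dimH_iUnion]
    exact iSup_le hdim
  calc upperHausdorffDim μ ≤ dimH Atot :=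
        iInf_le_of_le Atot (iInf_le_of_le hAtotMeas (iInf_le_of_le hμAtot le_rfl))
    _ ≤ sE := hdimAtot
end

section
/- Consider the regularized logistic regression loss ℓ(w,(a,y)) = log(1 + exp(−y aᵀw)) + λ‖w‖²/2 with λ > 0, data z_i = (a_i,y_i) with y_i ∈ {−1,+1}, R := max_i ‖a_i‖ satisfying R < 2√(mλ/M), and preconditioned SGD with a fixed symmetric positive definite matrix H satisfying mI ⪯ H ⪯ MI for some 0 < m ≤ M. Assume the step-size satisfies 0 < η < m/λ. Let μ be any Borel probability measure on ℝ^d invariant under the preconditioned SGD iterated function system with batch size b (so m_b = n/b batches). Then dim̄_H μ ≤ log(n/b) / log(1/(1 − η M^{−1} λ + (1/4) η m^{−1} R²)). -/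
open MeasureTheory Filter
open scoped ENNReal NNReal RealInnerProductSpace

noncomputable def sg (t : ℝ) : ℝ := Real.exp t / (1 + Real.exp t)

lemma one_add_exp_pos (t : ℝ) : 0 < 1 + Real.exp t := by positivity

lemma sg_hasDerivAt (t : ℝ) :
    HasDerivAt sg (Real.exp t / (1 + Real.exp t) ^ 2) t := by
  have h := (Real.hasDerivAt_exp t).div ((Real.hasDerivAt_exp t).const_add 1)
    (one_add_exp_pos t).ne'
  refine HasDerivAt.congr_deriv (f := sg) h ?_
  field_simp
  ring

lemma sg_deriv_le (t : ℝ) : ‖Real.exp t / (1 + Real.exp t) ^ 2‖ ≤ 1/4 := by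
  have h1 : 0 < 1 + Real.exp t := one_add_exp_pos t
  rw [Real.norm_eq_abs, abs_of_nonneg (by positivity)]
  rw [div_le_iff₀ (by positivity)]
  nlinarith [sq_nonneg (1 - Real.exp t), Real.exp_pos t]

lemma sg_lip : LipschitzWith (1/4 : ℝ≥0) sg := by
  have hdiff : Differentiable ℝ sg := fun t => (sg_hasDerivAt t).differentiableAt
  refine lipschitzWith_of_nnnorm_deriv_le hdiff (fun t => ?_)
  rw [(sg_hasDerivAt t).deriv]
  have := sg_deriv_le t
  rw [← NNReal.coe_le_coe]
  simpa [nnnorm, Real.norm_eq_abs] using this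

lemma sg_dist (s t : ℝ) : |sg s - sg t| ≤ (1/4) * |s - t| := by
  have := sg_lip.dist_le_mul s t
  simpa [Real.dist_eq] using this

variable {d : ℕ}
local notation "E" => EuclideanSpace ℝ (Fin d)

lemma grad_formula (lam yj : ℝ) (aj w : E) :
    HasGradientAt (fun w' : E => Real.log (1 + Real.exp (-yj * ⟪aj, w'⟫)) + lam * ‖w'‖ ^ 2 / 2)
      ((-yj * sg (-yj * ⟪aj, w⟫)) • aj + lam • w) w := by
  have hfd : HasFDerivAt (fun w' : E => Real.log (1 + Real.exp (-yj * ⟪aj, w'⟫)) + lam * ‖w'‖ ^ 2 / 2)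
      (innerSL ℝ ((-yj * sg (-yj * ⟪aj, w⟫)) • aj + lam • w)) w := by
    have hL : HasFDerivAt (fun w' : E => ⟪aj, w'⟫) (innerSL ℝ aj) w := by
      have := (innerSL ℝ aj).hasFDerivAt (x := w)
      exact this
    -- scalar part
    set t₀ : ℝ := ⟪aj, w⟫ with ht₀
    have hφ : HasDerivAt (fun t : ℝ => Real.log (1 + Real.exp (-yj * t)))
        (-yj * sg (-yj * t₀)) t₀ := by
      have h1 : HasDerivAt (fun t : ℝ => -yj * t) (-yj) t₀ := by
        simpa using (hasDerivAt_id t₀).const_mul (-yj)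
      have h2 : HasDerivAt (fun t : ℝ => Real.exp (-yj * t)) (Real.exp (-yj * t₀) * -yj) t₀ :=
        h1.exp
      have h3 : HasDerivAt (fun t : ℝ => 1 + Real.exp (-yj * t)) (Real.exp (-yj * t₀) * -yj) t₀ :=
        h2.const_add 1
      have h4 := h3.log (one_add_exp_pos _).ne'
      convert h4 using 1
      rw [sg]
      ring
    have hcomp := hφ.comp_hasFDerivAt w hL
    have hns : HasFDerivAt (fun w' : E => lam * ‖w'‖ ^ 2 / 2) (lam • innerSL ℝ w) w := by
      have h5 : HasFDerivAt (fun w' : E => ‖w'‖ ^ 2) (2 • innerSL ℝ w) w :=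
        (hasFDerivAt_id w).norm_sq
      have h6 := h5.const_mul (lam / 2)
      refine (h6.congr_of_eventuallyEq (Filter.Eventually.of_forall fun w' => ?_)).congr_fderiv ?_
      · show lam * ‖w'‖ ^ 2 / 2 = lam / 2 * ‖w'‖ ^ 2; ring
      · ext v
        simp only [ContinuousLinearMap.smul_apply, ContinuousLinearMap.coe_smul',
          Pi.smul_apply, smul_eq_mul, innerSL_apply_apply, two_smul,
          ContinuousLinearMap.add_apply]
        ring
    have := hcomp.add hns
    refine this.congr_fderiv ?_
    ext v
    simp only [ContinuousLinearMap.add_apply, ContinuousLinearMap.smul_apply, innerSL_apply_apply,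
      inner_add_left, inner_smul_left, smul_eq_mul, RCLike.conj_to_real, conj_trivial]
  have key : (InnerProductSpace.toDual ℝ E).symm
      (innerSL ℝ ((-yj * sg (-yj * ⟪aj, w⟫)) • aj + lam • w))
      = (-yj * sg (-yj * ⟪aj, w⟫)) • aj + lam • w := by
    apply (InnerProductSpace.toDual ℝ E).injective
    simp only [LinearIsometryEquiv.apply_symm_apply]
    ext v
    simp [InnerProductSpace.toDual_apply_apply]
  rw [hasFDerivAt_iff_hasGradientAt] at hfd
  rwa [key] at hfd


section spectral
open scoped Matrix
variable {H : Matrix (Fin d) (Fin d) ℝ} {cm cM : ℝ}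

lemma basis_dot (hH : H.IsHermitian) (k : Fin d) :
    (⇑(hH.eigenvectorBasis k) : Fin d → ℝ) ⬝ᵥ (⇑(hH.eigenvectorBasis k) : Fin d → ℝ) = 1 := by
  have h1 : ‖hH.eigenvectorBasis k‖ = 1 := hH.eigenvectorBasis.orthonormal.1 k
  have h2 : ⟪hH.eigenvectorBasis k, hH.eigenvectorBasis k⟫ = 1 := by
    rw [real_inner_self_eq_norm_sq, h1]; norm_num
  rw [← h2, PiLp.inner_apply]
  simp [dotProduct, sq]

lemma eig_low (hH : H.IsHermitian) (hHlow : (H - cm • (1 : Matrix (Fin d) (Fin d) ℝ)).PosSemidef)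
    (k : Fin d) : cm ≤ hH.eigenvalues k := by
  have hx := hHlow.dotProduct_mulVec_nonneg (⇑(hH.eigenvectorBasis k))
  have hmv : (H - cm • (1 : Matrix (Fin d) (Fin d) ℝ)) *ᵥ ⇑(hH.eigenvectorBasis k)
      = (hH.eigenvalues k - cm) • ⇑(hH.eigenvectorBasis k) := by
    rw [Matrix.sub_mulVec, hH.mulVec_eigenvectorBasis, Matrix.smul_mulVec,
      Matrix.one_mulVec, sub_smul]
  rw [hmv] at hx
  simp only [star_trivial, dotProduct_smul, smul_eq_mul, basis_dot hH, mul_one] at hx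
  linarith

lemma eig_high (hH : H.IsHermitian)
    (hHhigh : ((cM • (1 : Matrix (Fin d) (Fin d) ℝ)) - H).PosSemidef)
    (k : Fin d) : hH.eigenvalues k ≤ cM := by
  have hx := hHhigh.dotProduct_mulVec_nonneg (⇑(hH.eigenvectorBasis k))
  have hmv : ((cM • (1 : Matrix (Fin d) (Fin d) ℝ)) - H) *ᵥ ⇑(hH.eigenvectorBasis k)
      = (cM - hH.eigenvalues k) • ⇑(hH.eigenvectorBasis k) := by
    rw [Matrix.sub_mulVec, hH.mulVec_eigenvectorBasis, Matrix.smul_mulVec,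
      Matrix.one_mulVec, sub_smul]
  rw [hmv] at hx
  simp only [star_trivial, dotProduct_smul, smul_eq_mul, basis_dot hH, mul_one] at hx
  linarith

lemma inv_eigen (hHpd : H.PosDef) (k : Fin d) (hne : hHpd.1.eigenvalues k ≠ 0) :
    Matrix.toEuclideanLin H⁻¹ (hHpd.1.eigenvectorBasis k)
      = (hHpd.1.eigenvalues k)⁻¹ • hHpd.1.eigenvectorBasis k := by
  have hdet : IsUnit H.det := isUnit_iff_ne_zero.2 (ne_of_gt hHpd.det_pos)
  have hmv : H *ᵥ ⇑(hHpd.1.eigenvectorBasis k)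
      = hHpd.1.eigenvalues k • ⇑(hHpd.1.eigenvectorBasis k) := hHpd.1.mulVec_eigenvectorBasis k
  have hinvmv : H⁻¹ *ᵥ ⇑(hHpd.1.eigenvectorBasis k)
      = (hHpd.1.eigenvalues k)⁻¹ • ⇑(hHpd.1.eigenvectorBasis k) := by
    have h1 : H⁻¹ *ᵥ (H *ᵥ ⇑(hHpd.1.eigenvectorBasis k)) = ⇑(hHpd.1.eigenvectorBasis k) := by
      rw [Matrix.mulVec_mulVec, Matrix.nonsing_inv_mul _ hdet, Matrix.one_mulVec]
    rw [hmv, Matrix.mulVec_smul] at h1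
    calc H⁻¹ *ᵥ ⇑(hHpd.1.eigenvectorBasis k)
        = (hHpd.1.eigenvalues k)⁻¹ • (hHpd.1.eigenvalues k •
            (H⁻¹ *ᵥ ⇑(hHpd.1.eigenvectorBasis k))) := by
          rw [smul_smul, inv_mul_cancel₀ hne, one_smul]
      _ = (hHpd.1.eigenvalues k)⁻¹ • ⇑(hHpd.1.eigenvectorBasis k) := by rw [h1]
  apply (WithLp.equiv 2 (Fin d → ℝ)).injective
  exact hinvmv

lemma parseval (B : OrthonormalBasis (Fin d) ℝ (EuclideanSpace ℝ (Fin d)))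
    (x : EuclideanSpace ℝ (Fin d)) : ‖x‖ ^ 2 = ∑ i, ⟪B i, x⟫ ^ 2 := by
  have h1 : ‖x‖ = ‖B.repr x‖ := (B.repr.norm_map x).symm
  rw [h1, EuclideanSpace.norm_eq, Real.sq_sqrt (by positivity)]
  refine Finset.sum_congr rfl fun i _ => ?_
  rw [B.repr_apply_apply, Real.norm_eq_abs, sq_abs]

lemma diag_op_bound (hH : H.IsHermitian) (f : ℝ → ℝ) (C : ℝ) (hC : 0 ≤ C)
    (L : EuclideanSpace ℝ (Fin d) →ₗ[ℝ] EuclideanSpace ℝ (Fin d))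
    (hL : ∀ k, L (hH.eigenvectorBasis k) = f (hH.eigenvalues k) • hH.eigenvectorBasis k)
    (hf : ∀ k, |f (hH.eigenvalues k)| ≤ C) (v : EuclideanSpace ℝ (Fin d)) :
    ‖L v‖ ≤ C * ‖v‖ := by
  set B := hH.eigenvectorBasis with hB
  have key : ∀ i, ⟪B i, L v⟫ = f (hH.eigenvalues i) * ⟪B i, v⟫ := by
    intro i
    have hLv : L v = ∑ k, ⟪B k, v⟫ • (f (hH.eigenvalues k) • B k) := by
      conv_lhs => rw [← B.sum_repr' v]
      rw [map_sum]
      simp_rw [_root_.map_smul, hL]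
    rw [hLv, inner_sum]
    rw [Finset.sum_eq_single i]
    · rw [real_inner_smul_right, real_inner_smul_right, real_inner_self_eq_norm_sq,
        B.orthonormal.1 i]
      ring
    · intro k _ hk
      rw [real_inner_smul_right, real_inner_smul_right, B.orthonormal.2 (Ne.symm hk)]
      ring
    · intro hi; exact absurd (Finset.mem_univ i) hi
  have hsq : ‖L v‖ ^ 2 ≤ (C * ‖v‖) ^ 2 := by
    rw [parseval B (L v)]
    calc ∑ i, ⟪B i, L v⟫ ^ 2 = ∑ i, (f (hH.eigenvalues i) * ⟪B i, v⟫) ^ 2 := by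
          refine Finset.sum_congr rfl fun i _ => by rw [key i]
      _ ≤ ∑ i, C ^ 2 * ⟪B i, v⟫ ^ 2 := by
          refine Finset.sum_le_sum fun i _ => ?_
          rw [mul_pow]
          have h1 : f (hH.eigenvalues i) ^ 2 ≤ C ^ 2 := by
            rw [← sq_abs]
            exact pow_le_pow_left₀ (abs_nonneg _) (hf i) 2
          exact mul_le_mul_of_nonneg_right h1 (sq_nonneg _)
      _ = (C * ‖v‖) ^ 2 := by
          rw [← Finset.mul_sum, mul_pow, parseval B v]
  nlinarith [norm_nonneg (L v), mul_nonneg hC (norm_nonneg v)]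

lemma op1 (hHpd : H.PosDef) (hHlow : (H - cm • (1 : Matrix (Fin d) (Fin d) ℝ)).PosSemidef)
    (hHhigh : ((cM • (1 : Matrix (Fin d) (Fin d) ℝ)) - H).PosSemidef)
    (hcm : 0 < cm) (hcmM : cm ≤ cM) {c : ℝ} (hc0 : 0 ≤ c) (hccm : c ≤ cm)
    (v : EuclideanSpace ℝ (Fin d)) :
    ‖v - c • Matrix.toEuclideanLin H⁻¹ v‖ ≤ (1 - c * cM⁻¹) * ‖v‖ := by
  have hcM : (0:ℝ) < cM := lt_of_lt_of_le hcm hcmM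
  have hCnn : (0:ℝ) ≤ 1 - c * cM⁻¹ := by
    have : c * cM⁻¹ ≤ 1 := by
      rw [← mul_inv_cancel₀ hcM.ne']
      exact mul_le_mul_of_nonneg_right (le_trans hccm hcmM) (inv_nonneg.2 hcM.le)
    linarith
  have hne : ∀ k, hHpd.1.eigenvalues k ≠ 0 :=
    fun k => (lt_of_lt_of_le hcm (eig_low hHpd.1 hHlow k)).ne'
  have := diag_op_bound hHpd.1 (fun t => 1 - c * t⁻¹) (1 - c * cM⁻¹) hCnn
    (LinearMap.id - c • Matrix.toEuclideanLin H⁻¹)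
    (fun k => by
      simp only [LinearMap.sub_apply, LinearMap.id_apply, LinearMap.smul_apply]
      rw [inv_eigen hHpd k (hne k), smul_smul, sub_smul, one_smul])
    (fun k => by
      have hlow := eig_low hHpd.1 hHlow k
      have hhigh := eig_high hHpd.1 hHhigh k
      have hlpos : 0 < hHpd.1.eigenvalues k := lt_of_lt_of_le hcm hlow
      have h1 : c * (hHpd.1.eigenvalues k)⁻¹ ≤ 1 := by
        rw [← mul_inv_cancel₀ hlpos.ne']
        exact mul_le_mul_of_nonneg_right (le_trans hccm hlow) (inv_nonneg.2 hlpos.le)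
      have h2 : cM⁻¹ ≤ (hHpd.1.eigenvalues k)⁻¹ := by
        apply inv_anti₀ hlpos hhigh
      rw [abs_of_nonneg (by linarith)]
      have := mul_le_mul_of_nonneg_left h2 hc0
      linarith)
  simpa using this v

lemma op2 (hHpd : H.PosDef) (hHlow : (H - cm • (1 : Matrix (Fin d) (Fin d) ℝ)).PosSemidef)
    (hcm : 0 < cm) (v : EuclideanSpace ℝ (Fin d)) :
    ‖Matrix.toEuclideanLin H⁻¹ v‖ ≤ cm⁻¹ * ‖v‖ := by
  have hne : ∀ k, hHpd.1.eigenvalues k ≠ 0 :=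
    fun k => (lt_of_lt_of_le hcm (eig_low hHpd.1 hHlow k)).ne'
  have := diag_op_bound hHpd.1 (fun t => t⁻¹) cm⁻¹ (inv_nonneg.2 hcm.le)
    (Matrix.toEuclideanLin H⁻¹)
    (fun k => inv_eigen hHpd k (hne k))
    (fun k => by
      have hlow := eig_low hHpd.1 hHlow k
      have hlpos : 0 < hHpd.1.eigenvalues k := lt_of_lt_of_le hcm hlow
      rw [abs_of_nonneg (inv_nonneg.2 hlpos.le)]
      exact inv_anti₀ hcm hlow)
  simpa using this v

end spectral

section dimension
open Topology
variable {m : ℕ}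

/-- Iterated images of a set under an IFS. -/
def KIter (h : Fin m → EuclideanSpace ℝ (Fin d) → EuclideanSpace ℝ (Fin d))
    (B : Set (EuclideanSpace ℝ (Fin d))) : ℕ → Set (EuclideanSpace ℝ (Fin d))
  | 0 => B
  | (N+1) => ⋃ i, h i '' KIter h B N

/-- Images of a set under words of an IFS. -/
def wordSet (h : Fin m → EuclideanSpace ℝ (Fin d) → EuclideanSpace ℝ (Fin d))
    (B : Set (EuclideanSpace ℝ (Fin d))) : (N : ℕ) → (Fin N → Fin m) →
      Set (EuclideanSpace ℝ (Fin d))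
  | 0, _ => B
  | (N+1), w => h (w 0) '' wordSet h B N (Fin.tail w)

lemma KIter_eq_iUnion (h : Fin m → EuclideanSpace ℝ (Fin d) → EuclideanSpace ℝ (Fin d))
    (B : Set (EuclideanSpace ℝ (Fin d))) (N : ℕ) :
    KIter h B N = ⋃ w : Fin N → Fin m, wordSet h B N w := by
  induction N with
  | zero =>
    have : Nonempty (Fin 0 → Fin m) := ⟨fun i => i.elim0⟩
    show B = ⋃ _w : Fin 0 → Fin m, B
    exact (Set.iUnion_const B).symm
  | succ N ih =>
    apply Set.Subset.antisymm
    · rintro x hx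
      rw [KIter] at hx
      obtain ⟨i, hi⟩ := Set.mem_iUnion.1 hx
      rw [ih] at hi
      obtain ⟨x', hx', rfl⟩ := hi
      obtain ⟨v, hv⟩ := Set.mem_iUnion.1 hx'
      refine Set.mem_iUnion.2 ⟨Fin.cons i v, ?_⟩
      rw [wordSet, Fin.cons_zero, Fin.tail_cons]
      exact Set.mem_image_of_mem _ hv
    · refine Set.iUnion_subset fun w => ?_
      rw [wordSet, KIter]
      refine Set.subset_iUnion_of_subset (w 0) (Set.image_mono ?_)
      rw [ih]
      exact Set.subset_iUnion _ (Fin.tail w)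

lemma wordSet_diam (h : Fin m → EuclideanSpace ℝ (Fin d) → EuclideanSpace ℝ (Fin d))
    (B : Set (EuclideanSpace ℝ (Fin d))) {r' : ℝ≥0} (hlip : ∀ i, LipschitzWith r' (h i)) :
    ∀ N w, EMetric.diam (wordSet h B N w) ≤ (r' : ℝ≥0∞) ^ N * EMetric.diam B := by
  intro N
  induction N with
  | zero => intro w; simp [wordSet]
  | succ N ih =>
    intro w
    rw [wordSet]
    calc EMetric.diam (h (w 0) '' wordSet h B N (Fin.tail w))
        ≤ (r' : ℝ≥0∞) * EMetric.diam (wordSet h B N (Fin.tail w)) :=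
          (hlip (w 0)).ediam_image_le _
      _ ≤ (r' : ℝ≥0∞) * ((r' : ℝ≥0∞) ^ N * EMetric.diam B) := by
          exact mul_le_mul_right (ih _) _
      _ = (r' : ℝ≥0∞) ^ (N+1) * EMetric.diam B := by rw [pow_succ]; ring

lemma ifs_upperHausdorffDim_le (hm : 0 < m)
    (h : Fin m → EuclideanSpace ℝ (Fin d) → EuclideanSpace ℝ (Fin d))
    (r : ℝ) (hr0 : 0 < r) (hr1 : r < 1)
    (hlip : ∀ i, LipschitzWith r.toNNReal (h i))
    (p : Fin m → ℝ≥0∞) (hpsum : ∑ i, p i = 1)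
    (μ : Measure (EuclideanSpace ℝ (Fin d))) [IsProbabilityMeasure μ]
    (hinv : μ = ∑ i, p i • μ.map (h i)) :
    upperHausdorffDim μ ≤ ENNReal.ofReal (Real.log m / Real.log (1/r)) := by
  set s₀ := Real.log m / Real.log (1/r) with hs₀def
  have hlog : 0 < Real.log (1/r) := Real.log_pos (one_lt_one_div hr0 hr1)
  have hs₀ : 0 ≤ s₀ := div_nonneg (Real.log_nonneg (by exact_mod_cast hm)) hlog.le
  have hcont : ∀ i, Continuous (h i) := fun i => (hlip i).continuous
  have hmeas : ∀ i, Measurable (h i) := fun i => (hcont i).measurable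
  set c := ∑ i, ‖h i 0‖ with hcdef
  have hc0 : 0 ≤ c := Finset.sum_nonneg fun i _ => norm_nonneg _
  have hci : ∀ i, ‖h i 0‖ ≤ c := fun i =>
    Finset.single_le_sum (fun j _ => norm_nonneg (h j 0)) (Finset.mem_univ i)
  have main : ∀ T : ℝ, c / (1-r) ≤ T →
      ∃ A : Set (EuclideanSpace ℝ (Fin d)), MeasurableSet A ∧ dimH A ≤ ENNReal.ofReal s₀ ∧
        μ (Metric.closedBall 0 T) ≤ μ A := by
    intro T hT
    have hr1' : (0:ℝ) < 1 - r := by linarith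
    have hT0 : 0 ≤ T := le_trans (div_nonneg hc0 hr1'.le) hT
    set B := Metric.closedBall (0 : EuclideanSpace ℝ (Fin d)) T with hBdef
    have hBc : IsCompact B := isCompact_closedBall 0 T
    have hstab : ∀ i, h i '' B ⊆ B := by
      rintro i _ ⟨x, hx, rfl⟩
      simp only [hBdef, Metric.mem_closedBall] at *
      have h1 : dist (h i x) (h i 0) ≤ r * dist x 0 := by
        have := (hlip i).dist_le_mul x 0
        rwa [Real.coe_toNNReal r hr0.le] at this
      have h2 : dist (h i 0) 0 ≤ c := by rw [dist_zero_right]; exact hci i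
      have h3 : c ≤ (1-r) * T := by
        rw [div_le_iff₀ hr1'] at hT; linarith
      have h4 : dist x 0 ≤ T := hx
      calc dist (h i x) 0 ≤ dist (h i x) (h i 0) + dist (h i 0) 0 := dist_triangle _ _ _
        _ ≤ r * T + c := by
            have := mul_le_mul_of_nonneg_left h4 hr0.le
            linarith
        _ ≤ T := by nlinarith
    set K := KIter h B with hKdef
    have hKc : ∀ N, IsCompact (K N) := by
      intro N
      induction N with
      | zero => exact hBc
      | succ N ih => exact isCompact_iUnion fun i => ih.image (hcont i)
    have hKm : ∀ N, MeasurableSet (K N) := fun N => (hKc N).measurableSet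
    have hKsub : ∀ N, K (N+1) ⊆ K N := by
      intro N
      induction N with
      | zero => exact Set.iUnion_subset hstab
      | succ N ih => exact Set.iUnion_mono fun i => Set.image_mono ih
    have hanti : Antitone K := antitone_nat_of_succ_le hKsub
    have hμK : ∀ N, μ B ≤ μ (K N) := by
      intro N
      induction N with
      | zero => exact le_rfl
      | succ N ih =>
        have happ : μ (K (N+1)) = ∑ i, p i * μ (h i ⁻¹' K (N+1)) := by
          conv_lhs => rw [hinv]
          rw [Measure.finset_sum_apply]
          refine Finset.sum_congr rfl fun i _ => ?_
          rw [Measure.smul_apply, Measure.map_apply (hmeas i) (hKm _), smul_eq_mul]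
        have hpre : ∀ i, K N ⊆ h i ⁻¹' K (N+1) := by
          intro i x hx
          exact Set.mem_iUnion.2 ⟨i, Set.mem_image_of_mem _ hx⟩
        calc μ B ≤ μ (K N) := ih
          _ = ∑ i, p i * μ (K N) := by rw [← Finset.sum_mul, hpsum, one_mul]
          _ ≤ ∑ i, p i * μ (h i ⁻¹' K (N+1)) :=
              Finset.sum_le_sum fun i _ => mul_le_mul_right (measure_mono (hpre i)) _
          _ = μ (K (N+1)) := happ.symm
    set A := ⋂ N, K N with hAdef
    have hAm : MeasurableSet A := MeasurableSet.iInter fun N => hKm N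
    have hμA : μ B ≤ μ A := by
      have htd := tendsto_measure_iInter_atTop (μ := μ) (s := K)
        (fun N => (hKm N).nullMeasurableSet) hanti ⟨0, measure_ne_top μ _⟩
      exact ge_of_tendsto htd (Filter.Eventually.of_forall hμK)
    have hDfin : EMetric.diam B ≠ ⊤ := Metric.isBounded_closedBall.ediam_ne_top
    have hdim : dimH A ≤ ENNReal.ofReal s₀ := by
      refine dimH_le fun d' hd' => ?_
      by_contra hgt
      push_neg at hgt
      have hd'r : s₀ < (d' : ℝ) := by
        rw [← ENNReal.ofReal_coe_nnreal] at hgt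
        exact (ENNReal.ofReal_lt_ofReal_iff_of_nonneg hs₀).1 hgt
      have hd'0 : (0:ℝ) ≤ (d' : ℝ) := d'.coe_nonneg
      have hrho : (m : ℝ) * r ^ (d' : ℝ) < 1 := by
        have hlg : Real.log ((m:ℝ) * r ^ (d':ℝ)) < 0 := by
          rw [Real.log_mul (by positivity) (by positivity), Real.log_rpow hr0]
          have hlogr : Real.log (1/r) = - Real.log r := by rw [one_div, Real.log_inv]
          rw [hs₀def, div_lt_iff₀ hlog] at hd'r
          nlinarith
        calc (m:ℝ) * r ^ (d':ℝ) = Real.exp (Real.log ((m:ℝ) * r ^ (d':ℝ))) :=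
              (Real.exp_log (by positivity)).symm
          _ < Real.exp 0 := Real.exp_lt_exp.2 hlg
          _ = 1 := Real.exp_zero
      set rr : ℝ≥0∞ := ENNReal.ofReal r with hrrdef
      have hrr1 : rr < 1 := by rwa [hrrdef, ENNReal.ofReal_lt_one]
      have hdiam : ∀ N (w : Fin N → Fin m),
          EMetric.diam (wordSet h B N w) ≤ rr ^ N * EMetric.diam B :=
        fun N w => wordSet_diam h B hlip N w
      have htend0 : Tendsto (fun N => rr ^ N * EMetric.diam B) atTop (𝓝 0) := by
        have := ENNReal.Tendsto.mul_const (ENNReal.tendsto_pow_atTop_nhds_zero_of_lt_one hrr1)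
          (b := EMetric.diam B) (Or.inr hDfin)
        simpa using this
      have hcov : ∀ N : ℕ, A ⊆ ⋃ w : Fin N → Fin m, wordSet h B N w := fun N =>
        (Set.iInter_subset K N).trans (KIter_eq_iUnion h B N).subset
      have hH := Measure.hausdorffMeasure_le_liminf_sum (d' : ℝ) A (fun N => rr ^ N * EMetric.diam B)
        htend0 (fun N => wordSet h B N)
        (Filter.Eventually.of_forall fun N w => hdiam N w)
        (Filter.Eventually.of_forall hcov)
      set ρ : ℝ≥0∞ := ENNReal.ofReal ((m:ℝ) * r ^ (d':ℝ)) with hρdef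
      have hbound : ∀ N : ℕ,
          (∑ w : Fin N → Fin m, EMetric.diam (wordSet h B N w) ^ (d':ℝ)) ≤
            ρ ^ N * (EMetric.diam B) ^ (d':ℝ) := by
        intro N
        calc (∑ w : Fin N → Fin m, EMetric.diam (wordSet h B N w) ^ (d':ℝ))
            ≤ ∑ _w : Fin N → Fin m, (rr ^ N * EMetric.diam B) ^ (d':ℝ) :=
              Finset.sum_le_sum fun w _ => ENNReal.rpow_le_rpow (hdiam N w) hd'0
          _ = (Fintype.card (Fin N → Fin m)) • ((rr ^ N * EMetric.diam B) ^ (d':ℝ)) := by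
              rw [Finset.sum_const, Finset.card_univ]
          _ = ((m : ℝ≥0∞) ^ N) * ((rr ^ N * EMetric.diam B) ^ (d':ℝ)) := by
              rw [Fintype.card_fun, Fintype.card_fin, Fintype.card_fin, nsmul_eq_mul]
              norm_cast
          _ = ρ ^ N * (EMetric.diam B) ^ (d':ℝ) := by
              rw [ENNReal.mul_rpow_of_nonneg _ _ hd'0]
              rw [← ENNReal.rpow_natCast rr N, ← ENNReal.rpow_mul, mul_comm (N:ℝ) (d':ℝ),
                ENNReal.rpow_mul, ENNReal.rpow_natCast]
              rw [hρdef, ENNReal.ofReal_mul (by positivity), hrrdef,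
                ← ENNReal.ofReal_rpow_of_pos hr0, ENNReal.ofReal_natCast, mul_pow]
              ring
      have hρ1 : ρ < 1 := by rwa [hρdef, ENNReal.ofReal_lt_one]
      have htend0' : Tendsto (fun N => ρ ^ N * (EMetric.diam B) ^ (d':ℝ)) atTop (𝓝 0) := by
        have := ENNReal.Tendsto.mul_const (ENNReal.tendsto_pow_atTop_nhds_zero_of_lt_one hρ1)
          (b := (EMetric.diam B) ^ (d':ℝ))
          (Or.inr (ENNReal.rpow_ne_top_of_nonneg hd'0 hDfin))
        simpa using this
      have hzero : μH[(d' : ℝ)] A = 0 := by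
        refine le_antisymm ?_ zero_le
        refine hH.trans ?_
        have h1 : liminf (fun N => ∑ w : Fin N → Fin m,
            EMetric.diam (wordSet h B N w) ^ (d':ℝ)) atTop ≤
            liminf (fun N => ρ ^ N * (EMetric.diam B) ^ (d':ℝ)) atTop :=
          liminf_le_liminf (Filter.Eventually.of_forall hbound)
        rw [htend0'.liminf_eq] at h1
        exact h1
      rw [hzero] at hd'
      exact (ENNReal.zero_ne_top) hd'
    exact ⟨A, hAm, hdim, hμA⟩
  set T : ℕ → ℝ := fun j => max (c/(1-r)) j with hTdef
  have hTj : ∀ j, c/(1-r) ≤ T j := fun j => le_max_left _ _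
  choose A hAmeas hAdim hAμ using fun j : ℕ => main (T j) (hTj j)
  have hAtotm : MeasurableSet (⋃ j, A j) := MeasurableSet.iUnion hAmeas
  have hdimtot : dimH (⋃ j, A j) ≤ ENNReal.ofReal s₀ := by
    rw [dimH_iUnion]; exact iSup_le hAdim
  have hμ1 : μ (⋃ j, A j) = 1 := by
    refine le_antisymm prob_le_one ?_
    have hsub : ∀ j : ℕ, μ (Metric.closedBall (0 : EuclideanSpace ℝ (Fin d)) (j:ℝ)) ≤
        μ (⋃ j, A j) := fun j =>
      le_trans (measure_mono (Metric.closedBall_subset_closedBall (le_max_right _ _)))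
        (le_trans (hAμ j) (measure_mono (Set.subset_iUnion A j)))
    have huniv : (⋃ j : ℕ, Metric.closedBall (0 : EuclideanSpace ℝ (Fin d)) (j:ℝ)) =
        Set.univ := by
      refine Set.eq_univ_of_forall fun x => ?_
      obtain ⟨j, hj⟩ := exists_nat_ge ‖x‖
      exact Set.mem_iUnion.2 ⟨j, by simpa [Metric.mem_closedBall, dist_zero_right] using hj⟩
    have hmono : Monotone (fun j : ℕ => Metric.closedBall (0 : EuclideanSpace ℝ (Fin d)) (j:ℝ)) :=
      fun i j hij => Metric.closedBall_subset_closedBall (by exact_mod_cast hij)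
    have := Directed.measure_iUnion (μ := μ)
      (s := fun j : ℕ => Metric.closedBall (0 : EuclideanSpace ℝ (Fin d)) (j:ℝ))
      (hmono.directed_le)
    rw [huniv] at this
    calc (1:ℝ≥0∞) = μ Set.univ := (measure_univ).symm
      _ = ⨆ j : ℕ, μ (Metric.closedBall (0 : EuclideanSpace ℝ (Fin d)) (j:ℝ)) := this
      _ ≤ μ (⋃ j, A j) := iSup_le hsub
  calc upperHausdorffDim μ ≤ dimH (⋃ j, A j) :=
        iInf_le_of_le (⋃ j, A j) (iInf_le_of_le hAtotm (iInf_le_of_le hμ1 le_rfl))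
    _ ≤ ENNReal.ofReal s₀ := hdimtot

end dimension

set_option maxHeartbeats 2000000 in
/-- Regularized logistic regression, preconditioned SGD:
with `R < 2√(mλ/M)`, preconditioner `mI ⪯ H ⪯ MI` and step-size `0 < η < m/λ`,
any invariant measure `μ` of the preconditioned SGD iterated function system
with batch size `b` satisfies
`dim̄_H μ ≤ log(n/b) / log(1/(1 − η M⁻¹ λ + (1/4) η m⁻¹ R²))`. -/
theorem precond_sgd_logistic_hausdorff_dim_bound
    (d n b m : ℕ) (hb : 0 < b) (hnm : n = m * b)
    (a : Fin n → EuclideanSpace ℝ (Fin d)) (y : Fin n → ℝ)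
    (hy : ∀ i, y i = 1 ∨ y i = -1)
    (lam R η : ℝ) (hlam : 0 < lam)
    (H : Matrix (Fin d) (Fin d) ℝ) (cm cM : ℝ) (hcm : 0 < cm) (hcmM : cm ≤ cM)
    (hHpd : H.PosDef)
    (hHlow : (H - cm • (1 : Matrix (Fin d) (Fin d) ℝ)).PosSemidef)
    (hHhigh : ((cM • (1 : Matrix (Fin d) (Fin d) ℝ)) - H).PosSemidef)
    (hR : ∀ i, ‖a i‖ ≤ R) (hR0 : 0 ≤ R) (hRlam : R < 2 * Real.sqrt (cm * lam / cM))
    (hη : 0 < η) (hη' : η < cm / lam)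
    (ℓ : EuclideanSpace ℝ (Fin d) → EuclideanSpace ℝ (Fin d) × ℝ → ℝ)
    (hℓ : ∀ w z, ℓ w z = Real.log (1 + Real.exp (-z.2 * ⟪z.1, w⟫)) + lam * ‖w‖ ^ 2 / 2)
    (S : Fin m → Finset (Fin n))
    (hcard : ∀ i, (S i).card = b)
    (hdisj : ∀ i j, i ≠ j → Disjoint (S i) (S j))
    (hcover : ∀ j : Fin n, ∃ i, j ∈ S i)
    (p : Fin m → ℝ≥0∞) (hp : ∀ i, 0 < p i) (hpsum : ∑ i, p i = 1)
    (h : Fin m → EuclideanSpace ℝ (Fin d) → EuclideanSpace ℝ (Fin d))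
    (hdef : ∀ i w, h i w = w - (η / b) •
      Matrix.toEuclideanLin H⁻¹ (∑ j ∈ S i, gradient (fun w' => ℓ w' (a j, y j)) w))
    (μ : Measure (EuclideanSpace ℝ (Fin d))) [IsProbabilityMeasure μ]
    (hinv : μ = ∑ i, p i • μ.map (h i)) :
    upperHausdorffDim μ ≤
      ENNReal.ofReal (Real.log ((n : ℝ) / (b : ℝ)) /
        Real.log (1 / (1 - η * cM⁻¹ * lam + (1 / 4) * η * cm⁻¹ * R ^ 2))) := by
  have hm : 0 < m := by
    rcases Nat.eq_zero_or_pos m with hm0 | hm0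
    · subst hm0; simp at hpsum
    · exact hm0
  have hcM : (0:ℝ) < cM := lt_of_lt_of_le hcm hcmM
  have hb0 : (0:ℝ) < (b:ℝ) := by exact_mod_cast hb
  have hηlam : η * lam < cm := by
    rw [lt_div_iff₀ hlam] at hη'; linarith
  have hηlam0 : 0 ≤ η * lam := by positivity
  set r : ℝ := 1 - η * cM⁻¹ * lam + (1 / 4) * η * cm⁻¹ * R ^ 2 with hrdef
  have hr0 : 0 < r := by
    have h1 : η * cM⁻¹ * lam < 1 := by
      have h2 : η * lam * cM⁻¹ < cm * cM⁻¹ :=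
        mul_lt_mul_of_pos_right hηlam (inv_pos.2 hcM)
      have h3 : cm * cM⁻¹ ≤ 1 := by
        rw [← mul_inv_cancel₀ hcM.ne']
        exact mul_le_mul_of_nonneg_right hcmM (inv_nonneg.2 hcM.le)
      nlinarith
    have h4 : 0 ≤ (1 / 4) * η * cm⁻¹ * R ^ 2 := by positivity
    rw [hrdef]; nlinarith
  have hr1 : r < 1 := by
    have hx : (0:ℝ) ≤ cm * lam / cM := by positivity
    have hRsq : R ^ 2 < 4 * (cm * lam / cM) := by
      have := Real.sq_sqrt hx
      nlinarith [Real.sqrt_nonneg (cm * lam / cM)]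
    have key : (1 / 4) * η * cm⁻¹ * R ^ 2 < η * cM⁻¹ * lam := by
      have h5 : (1/4) * η * cm⁻¹ * R ^ 2 < (1/4) * η * cm⁻¹ * (4 * (cm * lam / cM)) := by
        have hpos : 0 < (1/4) * η * cm⁻¹ := by positivity
        nlinarith
      have h6 : (1/4) * η * cm⁻¹ * (4 * (cm * lam / cM)) = η * cM⁻¹ * lam := by
        field_simp
      linarith
    rw [hrdef]; linarith
  -- gradient formula
  have hgrad : ∀ (j : Fin n) (w : EuclideanSpace ℝ (Fin d)),
      gradient (fun w' => ℓ w' (a j, y j)) w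
        = (-(y j) * sg (-(y j) * ⟪a j, w⟫)) • a j + lam • w := by
    intro j w
    have hfun : (fun w' => ℓ w' (a j, y j)) = fun w' : EuclideanSpace ℝ (Fin d) =>
        Real.log (1 + Real.exp (-(y j) * ⟪a j, w'⟫)) + lam * ‖w'‖ ^ 2 / 2 :=
      funext fun w' => hℓ w' (a j, y j)
    rw [hfun]
    exact (grad_formula lam (y j) (a j) w).gradient
  have hq : ∀ (j : Fin n) (w w' : EuclideanSpace ℝ (Fin d)),
      |(-(y j) * sg (-(y j) * ⟪a j, w⟫)) - (-(y j) * sg (-(y j) * ⟪a j, w'⟫))|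
        ≤ (1/4) * (R * ‖w - w'‖) := by
    intro j w w'
    have hy1 : |y j| = 1 := by rcases hy j with h1 | h1 <;> rw [h1] <;> norm_num
    have hinner : ⟪a j, w⟫ - ⟪a j, w'⟫ = ⟪a j, w - w'⟫ := (inner_sub_right _ _ _).symm
    have hsg := sg_dist (-(y j) * ⟪a j, w⟫) (-(y j) * ⟪a j, w'⟫)
    have habs : |(-(y j) * ⟪a j, w⟫) - (-(y j) * ⟪a j, w'⟫)| = |⟪a j, w - w'⟫| := by
      rw [← hinner]
      rw [show (-(y j) * ⟪a j, w⟫) - (-(y j) * ⟪a j, w'⟫) = -(y j) * (⟪a j, w⟫ - ⟪a j, w'⟫) by ring]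
      rw [abs_mul, abs_neg, hy1, one_mul]
    have hCS : |⟪a j, w - w'⟫| ≤ R * ‖w - w'‖ := by
      calc |⟪a j, w - w'⟫| ≤ ‖a j‖ * ‖w - w'‖ := abs_real_inner_le_norm _ _
        _ ≤ R * ‖w - w'‖ := mul_le_mul_of_nonneg_right (hR j) (norm_nonneg _)
    calc |(-(y j) * sg (-(y j) * ⟪a j, w⟫)) - (-(y j) * sg (-(y j) * ⟪a j, w'⟫))|
        = |y j| * |sg (-(y j) * ⟪a j, w⟫) - sg (-(y j) * ⟪a j, w'⟫)| := by
          rw [show (-(y j) * sg (-(y j) * ⟪a j, w⟫)) - (-(y j) * sg (-(y j) * ⟪a j, w'⟫))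
            = -(y j) * (sg (-(y j) * ⟪a j, w⟫) - sg (-(y j) * ⟪a j, w'⟫)) by ring]
          rw [abs_mul, abs_neg]
      _ ≤ 1 * ((1/4) * |(-(y j) * ⟪a j, w⟫) - (-(y j) * ⟪a j, w'⟫)|) := by
          rw [hy1]; exact mul_le_mul_of_nonneg_left hsg (by norm_num)
      _ = (1/4) * |⟪a j, w - w'⟫| := by rw [one_mul, habs]
      _ ≤ (1/4) * (R * ‖w - w'‖) := by
          exact mul_le_mul_of_nonneg_left hCS (by norm_num)
  set TH := Matrix.toEuclideanLin H⁻¹ with hTHdef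
  have hsum : ∀ (i : Fin m) (w : EuclideanSpace ℝ (Fin d)),
      (∑ j ∈ S i, gradient (fun w' => ℓ w' (a j, y j)) w)
        = (∑ j ∈ S i, (-(y j) * sg (-(y j) * ⟪a j, w⟫)) • a j) + ((b:ℝ) * lam) • w := by
    intro i w
    rw [Finset.sum_congr rfl (fun j _ => hgrad j w), Finset.sum_add_distrib,
      Finset.sum_const, hcard i]
    congr 1
    rw [← Nat.cast_smul_eq_nsmul ℝ b (lam • w), smul_smul]
  have hexp : ∀ (i : Fin m) (w : EuclideanSpace ℝ (Fin d)),
      h i w = w - (η * lam) • TH w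
        - (η / b) • TH (∑ j ∈ S i, (-(y j) * sg (-(y j) * ⟪a j, w⟫)) • a j) := by
    intro i w
    rw [hdef i w, hsum i w, map_add, _root_.map_smul, smul_add, smul_smul]
    have hbb : η / (b:ℝ) * ((b:ℝ) * lam) = η * lam := by field_simp
    rw [hbb]
    abel
  have hLip : ∀ (i : Fin m) (w w' : EuclideanSpace ℝ (Fin d)),
      dist (h i w) (h i w') ≤ r * dist w w' := by
    intro i w w'
    rw [dist_eq_norm, dist_eq_norm]
    have hdiff : h i w - h i w' =
        ((w - w') - (η * lam) • TH (w - w'))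
          - (η / b) • TH ((∑ j ∈ S i, (-(y j) * sg (-(y j) * ⟪a j, w⟫)) • a j)
              - (∑ j ∈ S i, (-(y j) * sg (-(y j) * ⟪a j, w'⟫)) • a j)) := by
      rw [hexp i w, hexp i w', map_sub, map_sub, smul_sub, smul_sub]
      abel
    rw [hdiff]
    have htd : ‖(∑ j ∈ S i, (-(y j) * sg (-(y j) * ⟪a j, w⟫)) • a j)
        - (∑ j ∈ S i, (-(y j) * sg (-(y j) * ⟪a j, w'⟫)) • a j)‖
        ≤ (b:ℝ) * ((1/4) * (R * ‖w - w'‖) * R) := by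
      rw [← Finset.sum_sub_distrib]
      calc ‖∑ j ∈ S i, ((-(y j) * sg (-(y j) * ⟪a j, w⟫)) • a j
            - (-(y j) * sg (-(y j) * ⟪a j, w'⟫)) • a j)‖
          ≤ ∑ j ∈ S i, ‖(-(y j) * sg (-(y j) * ⟪a j, w⟫)) • a j
            - (-(y j) * sg (-(y j) * ⟪a j, w'⟫)) • a j‖ := norm_sum_le _ _
        _ ≤ ∑ _j ∈ S i, (1/4) * (R * ‖w - w'‖) * R := by
            refine Finset.sum_le_sum fun j hj => ?_
            rw [← sub_smul, norm_smul, Real.norm_eq_abs]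
            calc |(-(y j) * sg (-(y j) * ⟪a j, w⟫)) - (-(y j) * sg (-(y j) * ⟪a j, w'⟫))| * ‖a j‖
                ≤ ((1/4) * (R * ‖w - w'‖)) * R := by
                  apply mul_le_mul (hq j w w') (hR j) (norm_nonneg _)
                  positivity
              _ = (1/4) * (R * ‖w - w'‖) * R := by ring
        _ = (b:ℝ) * ((1/4) * (R * ‖w - w'‖) * R) := by
            rw [Finset.sum_const, hcard i, nsmul_eq_mul]
    calc ‖((w - w') - (η * lam) • TH (w - w'))
          - (η / b) • TH ((∑ j ∈ S i, (-(y j) * sg (-(y j) * ⟪a j, w⟫)) • a j)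
              - (∑ j ∈ S i, (-(y j) * sg (-(y j) * ⟪a j, w'⟫)) • a j))‖
        ≤ ‖(w - w') - (η * lam) • TH (w - w')‖
          + ‖(η / b) • TH ((∑ j ∈ S i, (-(y j) * sg (-(y j) * ⟪a j, w⟫)) • a j)
              - (∑ j ∈ S i, (-(y j) * sg (-(y j) * ⟪a j, w'⟫)) • a j))‖ := norm_sub_le _ _
      _ ≤ (1 - (η * lam) * cM⁻¹) * ‖w - w'‖
          + (η / b) * (cm⁻¹ * ((b:ℝ) * ((1/4) * (R * ‖w - w'‖) * R))) := by
          gcongr ?_ + ?_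
          · exact op1 hHpd hHlow hHhigh hcm hcmM hηlam0 hηlam.le (w - w')
          · rw [norm_smul, Real.norm_eq_abs, abs_of_nonneg (by positivity : (0:ℝ) ≤ η / b)]
            apply mul_le_mul_of_nonneg_left _ (by positivity : (0:ℝ) ≤ η / b)
            calc ‖TH ((∑ j ∈ S i, (-(y j) * sg (-(y j) * ⟪a j, w⟫)) • a j)
                  - (∑ j ∈ S i, (-(y j) * sg (-(y j) * ⟪a j, w'⟫)) • a j))‖
                ≤ cm⁻¹ * ‖(∑ j ∈ S i, (-(y j) * sg (-(y j) * ⟪a j, w⟫)) • a j)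
                  - (∑ j ∈ S i, (-(y j) * sg (-(y j) * ⟪a j, w'⟫)) • a j)‖ :=
                  op2 hHpd hHlow hcm _
              _ ≤ cm⁻¹ * ((b:ℝ) * ((1/4) * (R * ‖w - w'‖) * R)) :=
                  mul_le_mul_of_nonneg_left htd (inv_nonneg.2 hcm.le)
      _ = r * ‖w - w'‖ := by
          rw [hrdef]
          field_simp
  have hlips : ∀ i, LipschitzWith r.toNNReal (h i) := fun i =>
    LipschitzWith.of_dist_le_mul (fun x z => by
      rw [Real.coe_toNNReal r hr0.le]; exact hLip i x z)
  have hmain := ifs_upperHausdorffDim_le hm h r hr0 hr1 hlips p hpsum μ hinv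
  have hnb : (n:ℝ) / (b:ℝ) = (m:ℝ) := by
    rw [hnm]; push_cast; field_simp
  rw [hnb]
  exact hmain
end
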